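/- arXiv:1602.01306 — 4 statements merged into one kernel-verified Lean document; each statement's English description precedes it below -/
import Mathlib

section
/- Let D = (E,𝓕) be a vf-safe delta-matroid and let e ∈ E. Then: (1) e is a coloop of D if and only if e is a loop of D*{e}; and (2) e is neither a coloop nor a ribbon loop of D if and only if e is a non-trivial orientable ribbon loop of D*{e}. -/
open scoped symmDiff

structure SetSystem (α : Type) [DecidableEq α] where
  E : Finset α
  F : Finset (Finset α)

namespace SetSystem

variable {α : Type} [DecidableEq α]

/-- A delta-matroid: nonempty collection of feasible subsets of the ground set
satisfying the symmetric exchange axiom. -/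
def IsDeltaMatroid (D : SetSystem α) : Prop :=
  D.F.Nonempty ∧ (∀ F ∈ D.F, F ⊆ D.E) ∧
    ∀ X ∈ D.F, ∀ Y ∈ D.F, ∀ u ∈ X ∆ Y, ∃ v ∈ X ∆ Y, X ∆ ({u, v} : Finset α) ∈ D.F

/-- A matroid, viewed as a delta-matroid whose feasible sets are equicardinal. -/
def IsMatroid (D : SetSystem α) : Prop :=
  D.IsDeltaMatroid ∧ ∀ F₁ ∈ D.F, ∀ F₂ ∈ D.F, F₁.card = F₂.card

/-- The twist `D*A`. -/
def twist (D : SetSystem α) (A : Finset α) : SetSystem α :=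
  ⟨D.E, D.F.image fun F => A ∆ F⟩

/-- The dual `D* := D * E`. -/
def dual (D : SetSystem α) : SetSystem α := D.twist D.E

def IsLoop (D : SetSystem α) (e : α) : Prop := ∀ F ∈ D.F, e ∉ F

def IsColoop (D : SetSystem α) (e : α) : Prop := ∀ F ∈ D.F, e ∈ F

open Classical in
/-- Deletion of a single element (when `e` is a coloop, `D∖e := D/e`). -/
noncomputable def del (D : SetSystem α) (e : α) : SetSystem α :=
  if D.IsColoop e then ⟨D.E.erase e, D.F.image fun F => F.erase e⟩
  else ⟨D.E.erase e, D.F.filter fun F => e ∉ F⟩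

open Classical in
/-- Contraction of a single element (when `e` is a loop, `D/e := D∖e`). -/
noncomputable def con (D : SetSystem α) (e : α) : SetSystem α :=
  if D.IsLoop e then ⟨D.E.erase e, D.F.filter fun F => e ∉ F⟩
  else ⟨D.E.erase e, (D.F.filter fun F => e ∈ F).image fun F => F.erase e⟩

/-- Loop complementation on a single element. -/
def lc (D : SetSystem α) (e : α) : SetSystem α :=
  ⟨D.E, D.F ∆ ((D.F.filter fun F => e ∉ F).image fun F => insert e F)⟩

/-- Loop complementation on a set of elements (applied in some order;
the operation is order-independent). -/
noncomputable def lcSet (D : SetSystem α) (A : Finset α) : SetSystem α :=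
  A.toList.foldl lc D

/-- The dual pivot `D *̄ A := ((D*A)+A)*A`. -/
noncomputable def dpivot (D : SetSystem α) (A : Finset α) : SetSystem α :=
  ((D.twist A).lcSet A).twist A

/-- Set systems reachable from `D` by sequences of twists and loop complementations. -/
inductive Reachable : SetSystem α → SetSystem α → Prop
  | refl (D : SetSystem α) : Reachable D D
  | twist (D D' : SetSystem α) (A : Finset α) (hA : A ⊆ D'.E) :
      Reachable D D' → Reachable D (D'.twist A)
  | lc (D D' : SetSystem α) (A : Finset α) (hA : A ⊆ D'.E) :
      Reachable D D' → Reachable D (D'.lcSet A)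

/-- A vf-safe delta-matroid: any sequence of twists and loop complementations
yields a delta-matroid. -/
def VfSafe (D : SetSystem α) : Prop := ∀ D', Reachable D D' → D'.IsDeltaMatroid

/-- The minimum-cardinality feasible sets. -/
def Fmin (D : SetSystem α) : Finset (Finset α) :=
  D.F.filter fun F => ∀ F' ∈ D.F, F.card ≤ F'.card

/-- The maximum-cardinality feasible sets. -/
def Fmax (D : SetSystem α) : Finset (Finset α) :=
  D.F.filter fun F => ∀ F' ∈ D.F, F'.card ≤ F.card

/-- The lower matroid `D_min`. -/
def Dmin (D : SetSystem α) : SetSystem α := ⟨D.E, D.Fmin⟩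

def IsRibbonLoop (D : SetSystem α) (e : α) : Prop := ∀ F ∈ D.Fmin, e ∉ F

def IsNonorientableRL (D : SetSystem α) (e : α) : Prop :=
  D.IsRibbonLoop e ∧ (D.twist {e}).IsRibbonLoop e

def IsOrientableRL (D : SetSystem α) (e : α) : Prop :=
  D.IsRibbonLoop e ∧ (D.dpivot {e}).IsRibbonLoop e

def IsTrivialOrientableRL (D : SetSystem α) (e : α) : Prop :=
  D.IsOrientableRL e ∧ D.IsLoop e

def IsTrivialNonorientableRL (D : SetSystem α) (e : α) : Prop :=
  D.IsNonorientableRL e ∧ (D.lc e).IsLoop e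





lemma aux_sd_of_mem {e : α} {F : Finset α} (h : e ∈ F) :
    ({e} : Finset α) ∆ F = F.erase e := by
  ext x
  simp only [Finset.mem_symmDiff, Finset.mem_singleton, Finset.mem_erase]
  constructor
  · rintro (⟨rfl, hx⟩ | ⟨h1, h2⟩)
    · exact absurd h hx
    · exact ⟨h2, h1⟩
  · rintro ⟨hne, hx⟩
    exact Or.inr ⟨hx, hne⟩

lemma aux_sd_of_notMem {e : α} {F : Finset α} (h : e ∉ F) :
    ({e} : Finset α) ∆ F = insert e F := by
  ext x
  simp only [Finset.mem_symmDiff, Finset.mem_singleton, Finset.mem_insert]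
  constructor
  · rintro (⟨rfl, _⟩ | ⟨h1, _⟩)
    · exact Or.inl rfl
    · exact Or.inr h1
  · rintro (rfl | hx)
    · exact Or.inl ⟨rfl, h⟩
    · exact Or.inr ⟨hx, fun hh => h (hh ▸ hx)⟩

lemma aux_sd_pair_self {u : α} (X : Finset α) (hu : u ∈ X) :
    X ∆ ({u, u} : Finset α) = X.erase u := by
  ext x
  simp only [Finset.mem_symmDiff, Finset.mem_insert, Finset.mem_singleton, Finset.mem_erase]
  by_cases hx : x = u <;> simp_all

lemma aux_sd_pair_mem_mem {u v : α} (X : Finset α) (hu : u ∈ X) (hv : v ∈ X) (huv : u ≠ v) :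
    X ∆ ({u, v} : Finset α) = (X.erase u).erase v := by
  ext x
  simp only [Finset.mem_symmDiff, Finset.mem_insert, Finset.mem_singleton, Finset.mem_erase]
  by_cases h1 : x = u <;> by_cases h2 : x = v <;> simp_all

lemma aux_sd_pair_mem_notMem {u v : α} (X : Finset α) (hu : u ∈ X) (hv : v ∉ X) :
    X ∆ ({u, v} : Finset α) = insert v (X.erase u) := by
  have huv : u ≠ v := fun h => hv (h ▸ hu)
  ext x
  simp only [Finset.mem_symmDiff, Finset.mem_insert, Finset.mem_singleton, Finset.mem_erase]
  by_cases h1 : x = u <;> by_cases h2 : x = v <;> simp_all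


lemma aux_mem_twist (D : SetSystem α) (A G : Finset α) :
    G ∈ (D.twist A).F ↔ A ∆ G ∈ D.F := by
  simp only [twist, Finset.mem_image]
  constructor
  · rintro ⟨F, hF, rfl⟩
    rwa [symmDiff_symmDiff_cancel_left]
  · intro h
    exact ⟨A ∆ G, h, symmDiff_symmDiff_cancel_left A G⟩

lemma aux_twist_twist (D : SetSystem α) (A : Finset α) : (D.twist A).twist A = D := by
  obtain ⟨E, F⟩ := D
  simp only [twist, Finset.image_image]
  congr 1
  have : ((fun F => A ∆ F) ∘ fun F => A ∆ F) = id := by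
    funext G
    simp [Function.comp, symmDiff_symmDiff_cancel_left]
  rw [this, Finset.image_id]

lemma aux_lcSet_singleton (D : SetSystem α) (e : α) : D.lcSet {e} = D.lc e := by
  rw [lcSet, Finset.toList_singleton]
  rfl

lemma aux_mem_lc_of_notMem (D : SetSystem α) {e : α} {K : Finset α} (h : e ∉ K) :
    K ∈ (D.lc e).F ↔ K ∈ D.F := by
  simp only [lc, Finset.mem_symmDiff, Finset.mem_image, Finset.mem_filter]
  constructor
  · rintro (⟨h1, _⟩ | ⟨⟨F, _, rfl⟩, _⟩)
    · exact h1
    · exact absurd (Finset.mem_insert_self e F) h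
  · intro h1
    refine Or.inl ⟨h1, ?_⟩
    rintro ⟨F, _, rfl⟩
    exact h (Finset.mem_insert_self e F)

lemma aux_mem_lc_of_mem (D : SetSystem α) {e : α} {K : Finset α} (h : e ∈ K) :
    K ∈ (D.lc e).F ↔ ((K ∈ D.F ∧ K.erase e ∉ D.F) ∨ (K.erase e ∈ D.F ∧ K ∉ D.F)) := by
  have himg : (K ∈ (D.F.filter fun F => e ∉ F).image fun F => insert e F) ↔ K.erase e ∈ D.F := by
    simp only [Finset.mem_image, Finset.mem_filter]
    constructor
    · rintro ⟨F, ⟨hF, heF⟩, rfl⟩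
      rwa [Finset.erase_insert heF]
    · intro hK
      exact ⟨K.erase e, ⟨hK, Finset.notMem_erase e K⟩, Finset.insert_erase h⟩
  simp only [lc, Finset.mem_symmDiff, himg]

/-- (1) `e` is a coloop of `D` iff `e` is a loop of `D*{e}`; (2) `e` is neither a
coloop nor a ribbon loop of `D` iff `e` is a non-trivial orientable ribbon loop
of `D*{e}`. -/
theorem coloop_ribbonLoop_twist (D : SetSystem α) (hD : D.VfSafe) (e : α) (he : e ∈ D.E) :
    (D.IsColoop e ↔ (D.twist {e}).IsLoop e) ∧
    ((¬ D.IsColoop e ∧ ¬ D.IsRibbonLoop e) ↔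
      ((D.twist {e}).IsOrientableRL e ∧ ¬ (D.twist {e}).IsLoop e)) := by
  classical
  obtain ⟨hne, hsub, hexch⟩ := hD D (Reachable.refl D)
  -- Part 1
  have part1 : D.IsColoop e ↔ (D.twist {e}).IsLoop e := by
    constructor
    · intro h G hG heG
      have hF := (aux_mem_twist D {e} G).1 hG
      have := h _ hF
      rw [aux_sd_of_mem heG] at this
      exact Finset.notMem_erase e G this
    · intro h F hF
      by_contra heF
      have hG : {e} ∆ F ∈ (D.twist {e}).F := by
        rw [aux_mem_twist, symmDiff_symmDiff_cancel_left]
        exact hF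
      exact h _ hG (by rw [aux_sd_of_notMem heF]; exact Finset.mem_insert_self e F)
  refine ⟨part1, ?_⟩
  -- setup
  obtain ⟨F₀, hF₀, hF₀min⟩ := Finset.exists_min_image D.F Finset.card hne
  set m := F₀.card with hm
  have hmin : ∀ F ∈ D.F, m ≤ F.card := hF₀min
  have hFmin_iff : ∀ F, F ∈ D.Fmin ↔ F ∈ D.F ∧ F.card = m := by
    intro F
    simp only [Fmin, Finset.mem_filter]
    constructor
    · rintro ⟨hF, hmin'⟩
      exact ⟨hF, le_antisymm (hmin' _ hF₀) (hmin _ hF)⟩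
    · rintro ⟨hF, hc⟩
      exact ⟨hF, fun F' hF' => hc ▸ hmin _ hF'⟩
  have hdp : (D.twist {e}).dpivot {e} = (D.lc e).twist {e} := by
    rw [dpivot, aux_twist_twist, aux_lcSet_singleton]
  -- membership in D'' = (D.lc e).twist {e}
  have hD''_mem : ∀ K : Finset α, e ∈ K →
      (K ∈ ((D.lc e).twist {e}).F ↔ K.erase e ∈ D.F) := by
    intro K heK
    rw [aux_mem_twist, aux_sd_of_mem heK]
    exact aux_mem_lc_of_notMem D (Finset.notMem_erase e K)
  have hD''_not : ∀ K : Finset α, e ∉ K →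
      (K ∈ ((D.lc e).twist {e}).F ↔
        ((insert e K ∈ D.F ∧ K ∉ D.F) ∨ (K ∈ D.F ∧ insert e K ∉ D.F))) := by
    intro K heK
    rw [aux_mem_twist, aux_sd_of_notMem heK,
        aux_mem_lc_of_mem D (Finset.mem_insert_self e K), Finset.erase_insert heK]
  -- Lemma L : every feasible set contains a minimum feasible set
  have hL : ∀ K ∈ D.F, ∃ H, H ∈ D.F ∧ H.card = m ∧ H ⊆ K := by
    intro K hK
    have main : ∀ n : ℕ, ∀ H, H ∈ D.F → H.card = m → (H ∆ K).card ≤ n →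
        ∃ H', H' ∈ D.F ∧ H'.card = m ∧ H' ⊆ K := by
      intro n
      induction n with
      | zero =>
        intro H hH hHc hcard
        have h0 : H ∆ K = ∅ := Finset.card_eq_zero.1 (Nat.le_zero.1 hcard)
        have hEq : H = K := by rwa [← Finset.bot_eq_empty, symmDiff_eq_bot] at h0
        exact ⟨H, hH, hHc, hEq ▸ Finset.Subset.refl H⟩
      | succ n ih =>
        intro H hH hHc hcard
        by_cases hsubK : H ⊆ K
        · exact ⟨H, hH, hHc, hsubK⟩
        · obtain ⟨u, huH, huK⟩ := Finset.not_subset.1 hsubK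
          have hm1 : 1 ≤ m := by rw [← hHc] at *; exact Finset.card_pos.2 ⟨u, huH⟩
          have huXY : u ∈ H ∆ K := Finset.mem_symmDiff.2 (Or.inl ⟨huH, huK⟩)
          obtain ⟨v, hvXY, hfeas⟩ := hexch H hH K hK u huXY
          rcases Finset.mem_symmDiff.1 hvXY with ⟨hvH, hvK⟩ | ⟨hvK, hvH⟩
          · exfalso
            by_cases huv : u = v
            · subst huv
              rw [aux_sd_pair_self H huH] at hfeas
              have hle := hmin _ hfeas
              rw [Finset.card_erase_of_mem huH, hHc] at hle
              omega
            · rw [aux_sd_pair_mem_mem H huH hvH huv] at hfeas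
              have hle := hmin _ hfeas
              have hvH' : v ∈ H.erase u := Finset.mem_erase.2 ⟨fun hh => huv hh.symm, hvH⟩
              rw [Finset.card_erase_of_mem hvH', Finset.card_erase_of_mem huH, hHc] at hle
              omega
          · rw [aux_sd_pair_mem_notMem H huH hvH] at hfeas
            have hvH' : v ∉ H.erase u := fun hc => hvH (Finset.mem_of_mem_erase hc)
            have hH'c : (insert v (H.erase u)).card = m := by
              rw [Finset.card_insert_of_notMem hvH', Finset.card_erase_of_mem huH, hHc]
              omega
            have hdec : ((insert v (H.erase u)) ∆ K).card ≤ n := by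
              have hsub' : (insert v (H.erase u)) ∆ K ⊆ (H ∆ K).erase u := by
                intro x hx
                rcases Finset.mem_symmDiff.1 hx with ⟨hx1, hx2⟩ | ⟨hx1, hx2⟩
                · rcases Finset.mem_insert.1 hx1 with rfl | hx3
                  · exact absurd hvK hx2
                  · exact Finset.mem_erase.2 ⟨(Finset.mem_erase.1 hx3).1,
                      Finset.mem_symmDiff.2 (Or.inl ⟨(Finset.mem_erase.1 hx3).2, hx2⟩)⟩
                · have hxu : x ≠ u := fun hh => huK (hh ▸ hx1)
                  have hxH : x ∉ H := fun hh =>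
                    hx2 (Finset.mem_insert.2 (Or.inr (Finset.mem_erase.2 ⟨hxu, hh⟩)))
                  exact Finset.mem_erase.2 ⟨hxu, Finset.mem_symmDiff.2 (Or.inr ⟨hx1, hxH⟩)⟩
              calc ((insert v (H.erase u)) ∆ K).card
                  ≤ ((H ∆ K).erase u).card := Finset.card_le_card hsub'
                _ = (H ∆ K).card - 1 := Finset.card_erase_of_mem huXY
                _ ≤ n := by omega
            exact ih _ hfeas hH'c hdec
    exact main ((F₀ ∆ K).card) F₀ hF₀ rfl le_rfl
  -- Lemma L-b
  have hLb : (∀ F ∈ D.F, F.card = m → e ∉ F) →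
      ∀ K ∈ D.F, e ∈ K → K.card = m + 1 → K.erase e ∈ D.F := by
    intro hRL K hK heK hKc
    obtain ⟨H, hH, hHc, hHK⟩ := hL K hK
    have heH : e ∉ H := hRL H hH hHc
    have hsub' : H ⊆ K.erase e := Finset.subset_erase.2 ⟨hHK, heH⟩
    have hEq : H = K.erase e := Finset.eq_of_subset_of_card_le hsub' (by
      rw [Finset.card_erase_of_mem heK, hKc, hHc]; omega)
    exact hEq ▸ hH
  -- Lemma L-a
  have hLa : (∀ F ∈ D.F, F.card = m → e ∉ F) →
      (∃ F₁, F₁ ∈ D.F ∧ e ∈ F₁ ∧ F₁.card = m + 1) →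
      ∀ H ∈ D.F, H.card = m → insert e H ∈ D.F := by
    intro hRL hP
    obtain ⟨F₁, hF₁, heF₁, hF₁c⟩ := hP
    have hH₁ : F₁.erase e ∈ D.F := hLb hRL F₁ hF₁ heF₁ hF₁c
    have hH₁c : (F₁.erase e).card = m := by
      rw [Finset.card_erase_of_mem heF₁, hF₁c]; omega
    have main : ∀ n : ℕ, ∀ H1, H1 ∈ D.F → H1.card = m → insert e H1 ∈ D.F →
        ∀ H ∈ D.F, H.card = m → (H1 ∆ H).card ≤ n → insert e H ∈ D.F := by
      intro n
      induction n with
      | zero =>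
        intro H1 _ _ hins H hH hHc hcard
        have h0 : H1 ∆ H = ∅ := Finset.card_eq_zero.1 (Nat.le_zero.1 hcard)
        have hEq : H1 = H := by rwa [← Finset.bot_eq_empty, symmDiff_eq_bot] at h0
        exact hEq ▸ hins
      | succ n ih =>
        intro H1 hH1 hH1c hins H hH hHc hcard
        by_cases hsubH : H1 ⊆ H
        · have hEq : H1 = H := Finset.eq_of_subset_of_card_le hsubH (by rw [hH1c, hHc])
          exact hEq ▸ hins
        · obtain ⟨u, huH1, huH⟩ := Finset.not_subset.1 hsubH
          have heH1 : e ∉ H1 := hRL H1 hH1 hH1c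
          have heH : e ∉ H := hRL H hH hHc
          have hue : u ≠ e := fun hh => heH1 (hh ▸ huH1)
          have huX : u ∈ insert e H1 := Finset.mem_insert_of_mem huH1
          have hXc : (insert e H1).card = m + 1 := by
            rw [Finset.card_insert_of_notMem heH1, hH1c]
          have huXY : u ∈ (insert e H1) ∆ H := Finset.mem_symmDiff.2 (Or.inl ⟨huX, huH⟩)
          obtain ⟨v, hvXY, hfeas⟩ := hexch (insert e H1) hins H hH u huXY
          have hm1 : 1 ≤ m := by
            rw [← hH1c]; exact Finset.card_pos.2 ⟨u, huH1⟩
          rcases Finset.mem_symmDiff.1 hvXY with ⟨hvX, hvH⟩ | ⟨hvH, hvX⟩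
          · exfalso
            by_cases huv : u = v
            · subst huv
              rw [aux_sd_pair_self _ huX] at hfeas
              have hcard' : ((insert e H1).erase u).card = m := by
                rw [Finset.card_erase_of_mem huX, hXc]; omega
              have heX : e ∈ (insert e H1).erase u :=
                Finset.mem_erase.2 ⟨Ne.symm hue, Finset.mem_insert_self e H1⟩
              exact hRL _ hfeas hcard' heX
            · rw [aux_sd_pair_mem_mem _ huX hvX huv] at hfeas
              have hle := hmin _ hfeas
              have hvX' : v ∈ (insert e H1).erase u :=
                Finset.mem_erase.2 ⟨fun hh => huv hh.symm, hvX⟩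
              rw [Finset.card_erase_of_mem hvX', Finset.card_erase_of_mem huX, hXc] at hle
              omega
          · have hvH1 : v ∉ H1 := fun hh => hvX (Finset.mem_insert_of_mem hh)
            have hve : v ≠ e := fun hh => heH (hh ▸ hvH)
            rw [aux_sd_pair_mem_notMem _ huX hvX] at hfeas
            have hXH2 : insert v ((insert e H1).erase u) = insert e (insert v (H1.erase u)) := by
              ext x
              simp only [Finset.mem_insert, Finset.mem_erase]
              constructor
              · rintro (rfl | ⟨hxu, (rfl | hx)⟩)
                · exact Or.inr (Or.inl rfl)
                · exact Or.inl rfl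
                · exact Or.inr (Or.inr ⟨hxu, hx⟩)
              · rintro (rfl | rfl | ⟨hxu, hx⟩)
                · exact Or.inr ⟨Ne.symm hue, Or.inl rfl⟩
                · exact Or.inl rfl
                · exact Or.inr ⟨hxu, Or.inr hx⟩
            rw [hXH2] at hfeas
            have hvH1e : v ∉ H1.erase u := fun hh => hvH1 (Finset.mem_of_mem_erase hh)
            have hH2c : (insert v (H1.erase u)).card = m := by
              rw [Finset.card_insert_of_notMem hvH1e, Finset.card_erase_of_mem huH1, hH1c]
              omega
            have heH2 : e ∉ insert v (H1.erase u) := by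
              intro hh
              rcases Finset.mem_insert.1 hh with hh | hh
              · exact hve hh.symm
              · exact heH1 (Finset.mem_of_mem_erase hh)
            have hH2F : insert v (H1.erase u) ∈ D.F := by
              have h2 := hLb hRL (insert e (insert v (H1.erase u))) hfeas
                (Finset.mem_insert_self e _)
                (by rw [Finset.card_insert_of_notMem heH2, hH2c])
              rwa [Finset.erase_insert heH2] at h2
            have hdec : ((insert v (H1.erase u)) ∆ H).card ≤ n := by
              have hsub' : (insert v (H1.erase u)) ∆ H ⊆ (H1 ∆ H).erase u := by
                intro x hx
                rcases Finset.mem_symmDiff.1 hx with ⟨hx1, hx2⟩ | ⟨hx1, hx2⟩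
                · rcases Finset.mem_insert.1 hx1 with rfl | hx3
                  · exact absurd hvH hx2
                  · exact Finset.mem_erase.2 ⟨(Finset.mem_erase.1 hx3).1,
                      Finset.mem_symmDiff.2 (Or.inl ⟨(Finset.mem_erase.1 hx3).2, hx2⟩)⟩
                · have hxu : x ≠ u := fun hh => huH (hh ▸ hx1)
                  have hxH1 : x ∉ H1 := fun hh =>
                    hx2 (Finset.mem_insert.2 (Or.inr (Finset.mem_erase.2 ⟨hxu, hh⟩)))
                  exact Finset.mem_erase.2 ⟨hxu, Finset.mem_symmDiff.2 (Or.inr ⟨hx1, hxH1⟩)⟩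
              have huH1H : u ∈ H1 ∆ H := Finset.mem_symmDiff.2 (Or.inl ⟨huH1, huH⟩)
              calc ((insert v (H1.erase u)) ∆ H).card
                  ≤ ((H1 ∆ H).erase u).card := Finset.card_le_card hsub'
                _ = (H1 ∆ H).card - 1 := Finset.card_erase_of_mem huH1H
                _ ≤ n := by omega
            exact ih _ hH2F hH2c hfeas H hH hHc hdec
    intro H hH hHc
    have hinsF₁ : insert e (F₁.erase e) ∈ D.F := by
      rw [Finset.insert_erase heF₁]; exact hF₁
    exact main (((F₁.erase e) ∆ H).card) (F₁.erase e) hH₁ hH₁c hinsF₁ H hH hHc le_rfl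
  -- Part 2
  constructor
  · rintro ⟨hNC, hNRL⟩
    have hNL : ¬ (D.twist {e}).IsLoop e := fun h => hNC (part1.2 h)
    obtain ⟨F₂, hF₂min, heF₂⟩ : ∃ F, F ∈ D.Fmin ∧ e ∈ F := by
      by_contra hcc
      push_neg at hcc
      exact hNRL hcc
    obtain ⟨hF₂, hF₂c⟩ := (hFmin_iff F₂).1 hF₂min
    have hm1 : 1 ≤ m := by rw [← hF₂c] at *; exact Finset.card_pos.2 ⟨e, heF₂⟩
    refine ⟨⟨?_, ?_⟩, hNL⟩
    · -- e is a ribbon loop of D*{e}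
      intro G hGmin heG
      rw [Fmin, Finset.mem_filter] at hGmin
      obtain ⟨hG, hGmin'⟩ := hGmin
      have hwit : F₂.erase e ∈ (D.twist {e}).F := by
        rw [aux_mem_twist, aux_sd_of_notMem (Finset.notMem_erase e F₂),
            Finset.insert_erase heF₂]
        exact hF₂
      have hGle : G.card ≤ m - 1 := by
        have hh := hGmin' _ hwit
        rwa [Finset.card_erase_of_mem heF₂, hF₂c] at hh
      have hF : {e} ∆ G ∈ D.F := (aux_mem_twist D {e} G).1 hG
      rw [aux_sd_of_mem heG] at hF
      have hge := hmin _ hF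
      rw [Finset.card_erase_of_mem heG] at hge
      have hGpos : 1 ≤ G.card := Finset.card_pos.2 ⟨e, heG⟩
      omega
    · -- e is a ribbon loop of the dual pivot
      rw [hdp]
      intro K hKmin heK
      rw [Fmin, Finset.mem_filter] at hKmin
      obtain ⟨hK, hKmin'⟩ := hKmin
      have hwit : F₂.erase e ∈ ((D.lc e).twist {e}).F := by
        rw [hD''_not _ (Finset.notMem_erase e F₂), Finset.insert_erase heF₂]
        left
        refine ⟨hF₂, fun hc => ?_⟩
        have hh := hmin _ hc
        rw [Finset.card_erase_of_mem heF₂, hF₂c] at hh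
        omega
      have hKle : K.card ≤ m - 1 := by
        have hh := hKmin' _ hwit
        rwa [Finset.card_erase_of_mem heF₂, hF₂c] at hh
      have h1 := (hD''_mem K heK).1 hK
      have hge := hmin _ h1
      rw [Finset.card_erase_of_mem heK] at hge
      have hKpos : 1 ≤ K.card := Finset.card_pos.2 ⟨e, heK⟩
      omega
  · rintro ⟨⟨hRL', hRLdp⟩, hNL⟩
    rw [hdp] at hRLdp
    have hNC : ¬ D.IsColoop e := fun h => hNL (part1.1 h)
    refine ⟨hNC, fun hRL => ?_⟩
    have hRLm : ∀ F ∈ D.F, F.card = m → e ∉ F := by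
      intro F hF hc
      exact hRL F ((hFmin_iff F).2 ⟨hF, hc⟩)
    by_cases hP : ∃ F₁, F₁ ∈ D.F ∧ e ∈ F₁ ∧ F₁.card = m + 1
    · -- subcase B
      obtain ⟨F₁, hF₁, heF₁, hF₁c⟩ := hP
      have hF₁'' : F₁ ∈ ((D.lc e).twist {e}).F :=
        (hD''_mem F₁ heF₁).2 (hLb hRLm F₁ hF₁ heF₁ hF₁c)
      have hbound : ∀ K ∈ ((D.lc e).twist {e}).F, m + 1 ≤ K.card := by
        intro K hK
        by_cases heK : e ∈ K
        · have hge := hmin _ ((hD''_mem K heK).1 hK)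
          rw [Finset.card_erase_of_mem heK] at hge
          have hKpos : 1 ≤ K.card := Finset.card_pos.2 ⟨e, heK⟩
          omega
        · rcases (hD''_not K heK).1 hK with ⟨h1, h2⟩ | ⟨h1, h2⟩
          · have hc1 := hmin _ h1
            have hne' : (insert e K).card ≠ m := fun hc =>
              hRLm _ h1 hc (Finset.mem_insert_self e K)
            rw [Finset.card_insert_of_notMem heK] at hc1 hne'
            by_contra hlt
            push_neg at hlt
            have hKc : K.card = m := by omega
            have h3 := hLb hRLm (insert e K) h1 (Finset.mem_insert_self e K)
              (by rw [Finset.card_insert_of_notMem heK, hKc])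
            rw [Finset.erase_insert heK] at h3
            exact h2 h3
          · have hc1 := hmin _ h1
            by_contra hlt
            push_neg at hlt
            have hKc : K.card = m := by omega
            exact h2 (hLa hRLm ⟨F₁, hF₁, heF₁, hF₁c⟩ K h1 hKc)
      have hF₁min : F₁ ∈ ((D.lc e).twist {e}).Fmin := by
        rw [Fmin, Finset.mem_filter]
        exact ⟨hF₁'', fun K hK => hF₁c ▸ hbound K hK⟩
      exact hRLdp F₁ hF₁min heF₁
    · -- subcase A
      push_neg at hP
      have heF₀ : e ∉ F₀ := hRLm F₀ hF₀ hm.symm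
      have hG₀ : insert e F₀ ∈ (D.twist {e}).F := by
        rw [aux_mem_twist, aux_sd_of_mem (Finset.mem_insert_self e F₀),
            Finset.erase_insert heF₀]
        exact hF₀
      have hbound : ∀ G ∈ (D.twist {e}).F, m + 1 ≤ G.card := by
        intro G hG
        have hF : {e} ∆ G ∈ D.F := (aux_mem_twist D {e} G).1 hG
        by_cases heG : e ∈ G
        · rw [aux_sd_of_mem heG] at hF
          have hge := hmin _ hF
          rw [Finset.card_erase_of_mem heG] at hge
          have hGpos : 1 ≤ G.card := Finset.card_pos.2 ⟨e, heG⟩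
          omega
        · rw [aux_sd_of_notMem heG] at hF
          have h1 := hmin _ hF
          have h2 : (insert e G).card ≠ m := fun hc =>
            hRLm _ hF hc (Finset.mem_insert_self e G)
          have h3 := hP _ hF (Finset.mem_insert_self e G)
          rw [Finset.card_insert_of_notMem heG] at h1 h2 h3
          omega
      have hG₀min : insert e F₀ ∈ (D.twist {e}).Fmin := by
        rw [Fmin, Finset.mem_filter]
        refine ⟨hG₀, fun G hG => ?_⟩
        rw [Finset.card_insert_of_notMem heF₀, ← hm]
        exact hbound G hG
      exact hRL' _ hG₀min (Finset.mem_insert_self e F₀)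


end SetSystem
end

section
/- Let D = (E,𝓕) be a vf-safe delta-matroid. For A ⊆ E set D^{π(A)} := (D+A)*E. Then for every integer λ, P(D;λ) = Σ_{A⊆E} (−1)^{|A|} χ(D^{π(A)};λ), where P(D;λ) := Σ_{X⊆E} (−1)^{|X|} λ^{d(D*E*̄X)} is the Penrose polynomial of D, d(D') denotes the minimum cardinality of a feasible set of the set system D', and χ(D';λ) := Σ_{S⊆E} (−1)^{|S|} λ^{r'(E)−r'(S)} is the characteristic polynomial of (D')_min, with r'(S) := max{|F ∩ S| : F ∈ 𝓕_min(D')}. -/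
open scoped symmDiff

namespace SetSystem

variable {α : Type} [DecidableEq α]

/-- `d(D)`: the minimum cardinality of a feasible set of `D`. -/
noncomputable def minCard (D : SetSystem α) : ℕ := sInf {n : ℕ | ∃ F ∈ D.F, n = F.card}

/-- The rank function of the lower matroid `D_min`:
`r(S) = max {|F ∩ S| : F ∈ 𝓕_min(D)}`. -/
noncomputable def rankMin (D : SetSystem α) (S : Finset α) : ℕ :=
  sSup {n : ℕ | ∃ F ∈ D.Fmin, n = (F ∩ S).card}

/-- The characteristic polynomial of `D` (i.e. of `D_min`), evaluated at `l`. -/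
noncomputable def charPoly (D : SetSystem α) (l : ℤ) : ℤ :=
  ∑ S ∈ D.E.powerset, (-1 : ℤ) ^ S.card * l ^ (D.rankMin D.E - D.rankMin S)

/-- The Penrose polynomial of `D`, evaluated at `l`:
`P(D;λ) = Σ_{X⊆E} (−1)^{|X|} λ^{d(D*E*̄X)}`. -/
noncomputable def penrose (D : SetSystem α) (l : ℤ) : ℤ :=
  ∑ X ∈ D.E.powerset, (-1 : ℤ) ^ X.card * l ^ minCard ((D.twist D.E).dpivot X)

-- mem lemmas
lemma mem_twist {D : SetSystem α} {A f : Finset α} :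
    f ∈ (D.twist A).F ↔ A ∆ f ∈ D.F := by
  simp only [twist, Finset.mem_image]
  constructor
  · rintro ⟨g, hg, rfl⟩
    simpa [symmDiff_symmDiff_cancel_left] using hg
  · intro h
    exact ⟨A ∆ f, h, by simp [symmDiff_symmDiff_cancel_left]⟩

lemma mem_lc {D : SetSystem α} {e : α} {f : Finset α} :
    f ∈ (D.lc e).F ↔ Xor' (f ∈ D.F) (e ∈ f ∧ f.erase e ∈ D.F) := by
  have himg : f ∈ ((D.F.filter fun F => e ∉ F).image fun F => insert e F) ↔
      (e ∈ f ∧ f.erase e ∈ D.F) := by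
    simp only [Finset.mem_image, Finset.mem_filter]
    constructor
    · rintro ⟨g, ⟨hg, hge⟩, rfl⟩
      exact ⟨Finset.mem_insert_self e g, by rwa [Finset.erase_insert hge]⟩
    · rintro ⟨hef, hg⟩
      exact ⟨f.erase e, ⟨hg, Finset.notMem_erase e f⟩, Finset.insert_erase hef⟩
  simp only [lc, Finset.mem_symmDiff, himg, Xor', Xor]

lemma lc_E (D : SetSystem α) (e : α) : (D.lc e).E = D.E := rfl

lemma twist_E (D : SetSystem α) (A : Finset α) : (D.twist A).E = D.E := rfl

lemma lcSet_E (D : SetSystem α) (A : Finset α) : (D.lcSet A).E = D.E := by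
  rw [lcSet]
  induction A.toList generalizing D with
  | nil => rfl
  | cons x l ih => simpa [List.foldl_cons, lc_E] using ih (D.lc x)

lemma setSystem_ext {D D' : SetSystem α} (hE : D.E = D'.E)
    (hF : ∀ f, f ∈ D.F ↔ f ∈ D'.F) : D = D' := by
  cases D; cases D'
  simp only [mk.injEq]
  exact ⟨hE, Finset.ext hF⟩

lemma lc_lc (D : SetSystem α) (e : α) : (D.lc e).lc e = D := by
  refine setSystem_ext rfl fun f => ?_
  simp only [mem_lc, Xor', Xor]
  by_cases hef : e ∈ f
  · by_cases h1 : f ∈ D.F <;> by_cases h2 : f.erase e ∈ D.F <;>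
      simp [hef, h1, h2, Finset.notMem_erase]
  · simp [hef]

lemma lc_comm (D : SetSystem α) (e e' : α) : (D.lc e).lc e' = (D.lc e').lc e := by
  by_cases hee : e = e'
  · subst hee; rfl
  refine setSystem_ext rfl fun f => ?_
  simp only [mem_lc, Xor', Xor]
  by_cases he : e ∈ f <;> by_cases he' : e' ∈ f
  · have h1 : e ∈ f.erase e' := Finset.mem_erase.2 ⟨hee, he⟩
    have h2 : e' ∈ f.erase e := Finset.mem_erase.2 ⟨Ne.symm hee, he'⟩
    rw [show (f.erase e').erase e = (f.erase e).erase e' from Finset.erase_right_comm]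
    simp only [he, he', h1, h2, true_and]
    generalize (f ∈ D.F) = a
    generalize (f.erase e ∈ D.F) = b
    generalize (f.erase e' ∈ D.F) = c
    generalize ((f.erase e).erase e' ∈ D.F) = d
    tauto
  · have h2 : e' ∉ f.erase e := fun h => he' (Finset.mem_of_mem_erase h)
    simp only [he, he', h2, false_and, and_false, true_and, not_false_iff, and_true,
      false_or, or_false]
  · have h1 : e ∉ f.erase e' := fun h => he (Finset.mem_of_mem_erase h)
    simp only [he, he', h1, false_and, and_false, true_and, not_false_iff, and_true,
      false_or, or_false]
  · simp [he, he']

lemma twist_twist (D : SetSystem α) (A B : Finset α) :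
    (D.twist B).twist A = D.twist (A ∆ B) := by
  refine setSystem_ext rfl fun f => ?_
  rw [mem_twist, mem_twist, mem_twist]
  rw [show B ∆ (A ∆ f) = A ∆ B ∆ f by rw [← symmDiff_assoc, symmDiff_comm B A]]

lemma symmDiff_erase {B f : Finset α} {e : α} (he : e ∉ B) :
    B ∆ (f.erase e) = (B ∆ f).erase e := by
  ext a
  by_cases hae : a = e
  · subst hae
    simp [Finset.mem_symmDiff, he, Finset.notMem_erase]
  · simp [Finset.mem_symmDiff, Finset.mem_erase, hae]

lemma lc_twist (D : SetSystem α) {B : Finset α} {e : α} (he : e ∉ B) :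
    (D.twist B).lc e = (D.lc e).twist B := by
  refine setSystem_ext rfl fun f => ?_
  rw [mem_lc, mem_twist, mem_twist, mem_twist, mem_lc]
  have h1 : e ∈ B ∆ f ↔ e ∈ f := by simp [Finset.mem_symmDiff, he]
  rw [h1, symmDiff_erase he]

instance : RightCommutative (lc : SetSystem α → α → SetSystem α) :=
  ⟨fun D e e' => lc_comm D e e'⟩

lemma foldl_lc_twist {B : Finset α} :
    ∀ (l : List α) (D : SetSystem α), (∀ x ∈ l, x ∉ B) →
      l.foldl lc (D.twist B) = (l.foldl lc D).twist B := by
  intro l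
  induction l with
  | nil => intro D _; rfl
  | cons x l ih =>
    intro D h
    rw [List.foldl_cons, List.foldl_cons, lc_twist D (h x (by simp))]
    exact ih (D.lc x) fun y hy => h y (by simp [hy])

lemma lcSet_twist (D : SetSystem α) {A B : Finset α} (h : Disjoint A B) :
    (D.twist B).lcSet A = (D.lcSet A).twist B := by
  rw [lcSet, lcSet]
  exact foldl_lc_twist A.toList D fun x hx =>
    Finset.disjoint_left.1 h (by rwa [← Finset.mem_toList])

lemma lcSet_insert (D : SetSystem α) {A : Finset α} {s : α} (hs : s ∉ A) :
    D.lcSet (insert s A) = (D.lcSet A).lc s := by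
  have hperm : (insert s A).toList.Perm (A.toList ++ [s]) := by
    refine List.perm_of_nodup_nodup_toFinset_eq (Finset.nodup_toList _) ?_ ?_
    · refine List.Nodup.append (Finset.nodup_toList _) (List.nodup_singleton s) ?_
      intro x hx hx'
      simp only [List.mem_singleton] at hx'
      subst hx'
      exact hs (by rwa [← Finset.mem_toList])
    · rw [List.toFinset_append, Finset.toList_toFinset, List.toFinset_cons,
        List.toFinset_nil]
      ext a
      simp [or_comm]
  rw [lcSet, lcSet, hperm.foldl_eq D, List.foldl_append]
  rfl

/-- The key algebraic identity: `(D*E) *̄ A = (D+A)*E` for `A ⊆ E`. -/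
lemma dpivot_twist_eq (D : SetSystem α) {A : Finset α} (hA : A ⊆ D.E) :
    (D.twist D.E).dpivot A = (D.lcSet A).twist D.E := by
  rw [dpivot, twist_twist]
  have h1 : A ∆ D.E = D.E \ A := by
    ext a
    simp only [Finset.mem_symmDiff, Finset.mem_sdiff]
    constructor
    · rintro (⟨h, h'⟩ | ⟨h, h'⟩)
      · exact absurd (hA h) h'
      · exact ⟨h, h'⟩
    · rintro ⟨h, h'⟩
      exact Or.inr ⟨h, h'⟩
  rw [h1, lcSet_twist D (Finset.disjoint_sdiff), twist_twist]
  congr 1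
  ext a
  simp only [Finset.mem_symmDiff, Finset.mem_sdiff]
  by_cases h : a ∈ A
  · simp [h, hA h]
  · simp [h, and_comm]

lemma mem_Fmin {H : SetSystem α} {f : Finset α} :
    f ∈ H.Fmin ↔ f ∈ H.F ∧ ∀ F' ∈ H.F, f.card ≤ F'.card := Finset.mem_filter

lemma Fmin_nonempty {H : SetSystem α} (h : H.F.Nonempty) : H.Fmin.Nonempty := by
  obtain ⟨F₀, hF₀, hmin⟩ := Finset.exists_min_image H.F Finset.card h
  exact ⟨F₀, mem_Fmin.2 ⟨hF₀, hmin⟩⟩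

/-- Step lemma: a feasible set that is not of minimum size admits a smaller feasible
set whose part outside `S` does not grow. -/
lemma exists_smaller {H : SetSystem α}
    (hex : ∀ X ∈ H.F, ∀ Y ∈ H.F, ∀ u ∈ X ∆ Y, ∃ v ∈ X ∆ Y, X ∆ ({u, v} : Finset α) ∈ H.F)
    {X : Finset α} (hX : X ∈ H.F) (hlt : ∃ Y ∈ H.F, Y.card < X.card) (S : Finset α) :
    ∃ Y ∈ H.F, Y.card < X.card ∧ Y \ S ⊆ X \ S := by
  classical
  set T := H.F.filter (fun Y => Y.card < X.card) with hT
  have hTne : T.Nonempty := by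
    obtain ⟨Y, hY, hYlt⟩ := hlt
    exact ⟨Y, Finset.mem_filter.2 ⟨hY, hYlt⟩⟩
  obtain ⟨Y, hYT, hmin⟩ := Finset.exists_min_image T (fun Y => (Y \ (S ∪ X)).card) hTne
  obtain ⟨hYF, hYlt⟩ := Finset.mem_filter.1 hYT
  refine ⟨Y, hYF, hYlt, ?_⟩
  by_contra hcon
  obtain ⟨u, huY, huX⟩ : ∃ u, u ∈ Y \ S ∧ u ∉ X \ S := by
    rcases Finset.not_subset.1 hcon with ⟨u, h1, h2⟩
    exact ⟨u, h1, h2⟩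
  have huY' : u ∈ Y := (Finset.mem_sdiff.1 huY).1
  have huS : u ∉ S := (Finset.mem_sdiff.1 huY).2
  have huX' : u ∉ X := fun h => huX (Finset.mem_sdiff.2 ⟨h, huS⟩)
  have hu : u ∈ Y ∆ X := Finset.mem_symmDiff.2 (Or.inl ⟨huY', huX'⟩)
  obtain ⟨v, hv, hfeas⟩ := hex Y hYF X hX u hu
  set Y' := Y ∆ ({u, v} : Finset α) with hY'
  have hYsub : Y' ⊆ insert v (Y.erase u) := by
    intro a ha
    rcases Finset.mem_symmDiff.1 ha with ⟨haY, hauv⟩ | ⟨hauv, haY⟩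
    · refine Finset.mem_insert.2 (Or.inr (Finset.mem_erase.2 ⟨?_, haY⟩))
      intro hau; exact hauv (by simp [hau])
    · rcases Finset.mem_insert.1 hauv with hau | hav
      · exact absurd (hau ▸ huY') haY
      · simp only [Finset.mem_singleton] at hav
        exact Finset.mem_insert.2 (Or.inl hav)
  have hYcard : Y'.card ≤ Y.card := by
    calc Y'.card ≤ (insert v (Y.erase u)).card := Finset.card_le_card hYsub
    _ ≤ (Y.erase u).card + 1 := Finset.card_insert_le _ _
    _ = Y.card - 1 + 1 := by rw [Finset.card_erase_of_mem huY']
    _ = Y.card := Nat.succ_pred_eq_of_pos (Finset.card_pos.2 ⟨u, huY'⟩)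
  have huY'' : u ∉ Y' := by
    intro h
    rcases Finset.mem_symmDiff.1 h with ⟨_, h2⟩ | ⟨_, h2⟩
    · exact h2 (Finset.mem_insert_self u _)
    · exact h2 huY'
  have hmemYX : u ∈ Y \ (S ∪ X) := by
    simp only [Finset.mem_sdiff, Finset.mem_union]
    exact ⟨huY', fun h => h.elim huS huX'⟩
  have hsub2 : Y' \ (S ∪ X) ⊆ (Y \ (S ∪ X)).erase u := by
    intro a ha
    have haY' := (Finset.mem_sdiff.1 ha).1
    have haSX := (Finset.mem_sdiff.1 ha).2
    have hane : a ≠ u := fun h => huY'' (h ▸ haY')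
    refine Finset.mem_erase.2 ⟨hane, Finset.mem_sdiff.2 ⟨?_, haSX⟩⟩
    rcases Finset.mem_insert.1 (hYsub haY') with hav | haE
    · subst hav
      rcases Finset.mem_symmDiff.1 hv with ⟨h1, _⟩ | ⟨h1, _⟩
      · exact h1
      · exact absurd (Finset.mem_union_right S h1) haSX
    · exact Finset.mem_of_mem_erase haE
  have hlt2 : (Y' \ (S ∪ X)).card < (Y \ (S ∪ X)).card := by
    calc (Y' \ (S ∪ X)).card ≤ ((Y \ (S ∪ X)).erase u).card := Finset.card_le_card hsub2
    _ = (Y \ (S ∪ X)).card - 1 := Finset.card_erase_of_mem hmemYX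
    _ < (Y \ (S ∪ X)).card := Nat.sub_lt (Finset.card_pos.2 ⟨u, hmemYX⟩) Nat.one_pos
  have hY'T : Y' ∈ T := Finset.mem_filter.2 ⟨hfeas, lt_of_le_of_lt hYcard hYlt⟩
  exact absurd (hmin Y' hY'T) (not_le.2 hlt2)

/-- Every feasible set dominates a minimum feasible set outside `S`. -/
lemma exists_min_subset {H : SetSystem α}
    (hex : ∀ X ∈ H.F, ∀ Y ∈ H.F, ∀ u ∈ X ∆ Y, ∃ v ∈ X ∆ Y, X ∆ ({u, v} : Finset α) ∈ H.F)
    (S : Finset α) :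
    ∀ (n : ℕ) (X : Finset α), X.card = n → X ∈ H.F → ∃ F₀ ∈ H.Fmin, F₀ \ S ⊆ X \ S := by
  intro n
  induction n using Nat.strong_induction_on with
  | _ n ih =>
    intro X hn hX
    by_cases hmin : X ∈ H.Fmin
    · exact ⟨X, hmin, subset_rfl⟩
    · have hlt : ∃ Y ∈ H.F, Y.card < X.card := by
        by_contra h
        push_neg at h
        exact hmin (mem_Fmin.2 ⟨hX, fun F' hF' => h F' hF'⟩)
      obtain ⟨Y, hY, hYlt, hYsub⟩ := exists_smaller hex hX hlt S
      obtain ⟨F₀, hF₀, hsub⟩ := ih Y.card (hn ▸ hYlt) Y rfl hY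
      exact ⟨F₀, hF₀, hsub.trans hYsub⟩

/-- The bridge: the characteristic-polynomial exponent equals the min of `|F \ S|`
over all feasible sets. -/
lemma rankMin_sub_eq {H : SetSystem α} (hDM : H.IsDeltaMatroid) (S : Finset α) :
    H.rankMin H.E - H.rankMin S = sInf {n : ℕ | ∃ F ∈ H.F, n = (F \ S).card} := by
  obtain ⟨hne, hsub, hex⟩ := hDM
  obtain ⟨F₀, hF₀⟩ := Fmin_nonempty hne
  have hcard : ∀ F ∈ H.Fmin, F.card = F₀.card := fun F hF =>
    le_antisymm ((mem_Fmin.1 hF).2 F₀ (mem_Fmin.1 hF₀).1) ((mem_Fmin.1 hF₀).2 F (mem_Fmin.1 hF).1)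
  have hrE : H.rankMin H.E = F₀.card := by
    have : {n : ℕ | ∃ F ∈ H.Fmin, n = (F ∩ H.E).card} = {F₀.card} := by
      ext n
      simp only [Set.mem_setOf_eq, Set.mem_singleton_iff]
      constructor
      · rintro ⟨F, hF, rfl⟩
        rw [Finset.inter_eq_left.2 (hsub F (mem_Fmin.1 hF).1), hcard F hF]
      · rintro rfl
        exact ⟨F₀, hF₀, by rw [Finset.inter_eq_left.2 (hsub F₀ (mem_Fmin.1 hF₀).1)]⟩
    rw [rankMin, this, csSup_singleton]
  have hbdd : BddAbove {n : ℕ | ∃ F ∈ H.Fmin, n = (F ∩ S).card} := by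
    refine ⟨S.card, ?_⟩
    rintro n ⟨F, _, rfl⟩
    exact Finset.card_le_card (Finset.inter_subset_right)
  have hSne : {n : ℕ | ∃ F ∈ H.Fmin, n = (F ∩ S).card}.Nonempty := ⟨(F₀ ∩ S).card, F₀, hF₀, rfl⟩
  obtain ⟨F₁, hF₁, hF₁eq⟩ : ∃ F ∈ H.Fmin, H.rankMin S = (F ∩ S).card := Nat.sSup_mem hSne hbdd
  have hub : ∀ F ∈ H.Fmin, (F ∩ S).card ≤ H.rankMin S := fun F hF =>
    le_csSup hbdd ⟨F, hF, rfl⟩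
  rw [hrE, hF₁eq]
  have key : ∀ F ∈ H.Fmin, (F \ S).card = F.card - (F ∩ S).card := fun F _ => by
    have := Finset.card_inter_add_card_sdiff F S
    omega
  apply le_antisymm
  · have hQne : ({n : ℕ | ∃ F ∈ H.F, n = (F \ S).card}).Nonempty :=
      ⟨(F₀ \ S).card, F₀, (mem_Fmin.1 hF₀).1, rfl⟩
    apply le_csInf hQne
    rintro n ⟨F, hF, rfl⟩
    obtain ⟨F₂, hF₂, hsub2⟩ := exists_min_subset hex S F.card F rfl hF
    have h1 : (F₂ \ S).card ≤ (F \ S).card := Finset.card_le_card hsub2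
    have h2 : (F₂ \ S).card = F₂.card - (F₂ ∩ S).card := key F₂ hF₂
    have h3 : (F₂ ∩ S).card ≤ (F₁ ∩ S).card := hF₁eq ▸ hub F₂ hF₂
    have h4 : F₂.card = F₀.card := hcard F₂ hF₂
    have h5 := Finset.card_inter_add_card_sdiff F₂ S
    omega
  · have hmem : (F₁ \ S).card ∈ {n : ℕ | ∃ F ∈ H.F, n = (F \ S).card} :=
      ⟨F₁, (mem_Fmin.1 hF₁).1, rfl⟩
    have := Nat.sInf_le hmem
    have h2 : (F₁ \ S).card = F₁.card - (F₁ ∩ S).card := key F₁ hF₁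
    have h4 : F₁.card = F₀.card := hcard F₁ hF₁
    have h5 := Finset.card_inter_add_card_sdiff F₁ S
    omega


/-- The value set of `|(B ∆ f) \ S|` over a twisted family. -/
lemma valset_twist (G : SetSystem α) (B S : Finset α) :
    {n : ℕ | ∃ F ∈ (G.twist B).F, n = (F \ S).card}
      = {n : ℕ | ∃ f ∈ G.F, n = ((B ∆ f) \ S).card} := by
  ext n
  simp only [Set.mem_setOf_eq, mem_twist]
  constructor
  · rintro ⟨F, hF, rfl⟩
    exact ⟨B ∆ F, hF, by rw [symmDiff_symmDiff_cancel_left]⟩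
  · rintro ⟨f, hf, rfl⟩
    exact ⟨B ∆ f, by rwa [symmDiff_symmDiff_cancel_left], rfl⟩

lemma phi_insert {B S : Finset α} {s : α} (hsS : s ∈ S) (f : Finset α) (hs : s ∉ f) :
    (B ∆ insert s f) \ S = (B ∆ f) \ S := by
  ext a
  by_cases has : a = s
  · subst has
    simp [hsS]
  · simp only [Finset.mem_sdiff, Finset.mem_symmDiff, Finset.mem_insert, has, false_or]

lemma valset_lc_subset {G : SetSystem α} {B S : Finset α} {s : α} (hsS : s ∈ S) :
    {n : ℕ | ∃ f ∈ (G.lc s).F, n = ((B ∆ f) \ S).card}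
      ⊆ {n : ℕ | ∃ f ∈ G.F, n = ((B ∆ f) \ S).card} := by
  rintro n ⟨f, hf, rfl⟩
  rcases mem_lc.1 hf with ⟨hfF, -⟩ | ⟨⟨hsf, hferase⟩, -⟩
  · exact ⟨f, hfF, rfl⟩
  · refine ⟨f.erase s, hferase, ?_⟩
    conv_lhs => rw [← Finset.insert_erase hsf]
    rw [phi_insert hsS _ (Finset.notMem_erase s f)]

lemma valset_lc_eq (G : SetSystem α) {B S : Finset α} {s : α} (hsS : s ∈ S) :
    {n : ℕ | ∃ f ∈ (G.lc s).F, n = ((B ∆ f) \ S).card}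
      = {n : ℕ | ∃ f ∈ G.F, n = ((B ∆ f) \ S).card} := by
  refine Set.Subset.antisymm (valset_lc_subset hsS) ?_
  conv_lhs => rw [← lc_lc G s]
  exact valset_lc_subset (G := G.lc s) hsS

/-- The exponent appearing in the expansion. -/
noncomputable def qval (D : SetSystem α) (A S : Finset α) : ℕ :=
  sInf {n : ℕ | ∃ f ∈ (D.lcSet A).F, n = ((D.E ∆ f) \ S).card}

lemma qval_symmDiff (D : SetSystem α) {A S : Finset α} {s : α} (hsS : s ∈ S) :
    D.qval (A ∆ {s}) S = D.qval A S := by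
  by_cases hsA : s ∈ A
  · have h1 : A ∆ ({s} : Finset α) = A.erase s := by
      ext a
      simp only [Finset.mem_symmDiff, Finset.mem_singleton, Finset.mem_erase]
      constructor
      · rintro (⟨h, h'⟩ | ⟨rfl, h'⟩)
        · exact ⟨h', h⟩
        · exact absurd hsA h'
      · rintro ⟨h, h'⟩
        exact Or.inl ⟨h', h⟩
    have h2 : D.lcSet A = (D.lcSet (A.erase s)).lc s := by
      conv_lhs => rw [← Finset.insert_erase hsA]
      exact lcSet_insert D (Finset.notMem_erase s A)
    rw [qval, qval, h1, h2, valset_lc_eq _ hsS]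
  · have h1 : A ∆ ({s} : Finset α) = insert s A := by
      ext a
      simp only [Finset.mem_symmDiff, Finset.mem_singleton, Finset.mem_insert]
      constructor
      · rintro (⟨h, h'⟩ | ⟨rfl, h'⟩)
        · exact Or.inr h
        · exact Or.inl rfl
      · rintro (rfl | h)
        · exact Or.inr ⟨rfl, hsA⟩
        · exact Or.inl ⟨h, fun he => hsA (he ▸ h)⟩
    rw [qval, qval, h1, lcSet_insert D hsA, valset_lc_eq _ hsS]


lemma symmDiff_singleton_of_mem {A : Finset α} {s : α} (hsA : s ∈ A) :
    A ∆ ({s} : Finset α) = A.erase s := by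
  ext a
  simp only [Finset.mem_symmDiff, Finset.mem_singleton, Finset.mem_erase]
  constructor
  · rintro (⟨h, h'⟩ | ⟨rfl, h'⟩)
    · exact ⟨h', h⟩
    · exact absurd hsA h'
  · rintro ⟨h, h'⟩
    exact Or.inl ⟨h', h⟩

lemma symmDiff_singleton_of_not_mem {A : Finset α} {s : α} (hsA : s ∉ A) :
    A ∆ ({s} : Finset α) = insert s A := by
  ext a
  simp only [Finset.mem_symmDiff, Finset.mem_singleton, Finset.mem_insert]
  constructor
  · rintro (⟨h, h'⟩ | ⟨rfl, h'⟩)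
    · exact Or.inr h
    · exact Or.inl rfl
  · rintro (rfl | h)
    · exact Or.inr ⟨rfl, hsA⟩
    · exact Or.inl ⟨h, fun he => hsA (he ▸ h)⟩

lemma neg_one_pow_symmDiff_singleton {A : Finset α} {s : α} :
    ((-1 : ℤ)) ^ (A ∆ ({s} : Finset α)).card = -(-1 : ℤ) ^ A.card := by
  by_cases hsA : s ∈ A
  · rw [symmDiff_singleton_of_mem hsA]
    have h : A.card = (A.erase s).card + 1 := (Finset.card_erase_add_one hsA).symm
    rw [h, pow_succ]
    ring
  · rw [symmDiff_singleton_of_not_mem hsA, Finset.card_insert_of_notMem hsA, pow_succ]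
    ring

/-- The Penrose polynomial as an alternating sum of characteristic polynomials of
the delta-matroids `D^{π(A)} = (D+A)*E`. -/
theorem penrose_eq_sum_charPoly (D : SetSystem α) (hD : D.VfSafe) (l : ℤ) :
    D.penrose l =
      ∑ A ∈ D.E.powerset, (-1 : ℤ) ^ A.card * ((D.lcSet A).dual).charPoly l := by
  classical
  have hdual : ∀ A : Finset α, (D.lcSet A).dual = (D.lcSet A).twist D.E := by
    intro A
    rw [dual, lcSet_E]
  have hDM : ∀ A ∈ D.E.powerset, ((D.lcSet A).twist D.E).IsDeltaMatroid := by
    intro A hA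
    have h1 : Reachable D (D.lcSet A) :=
      Reachable.lc D D A (Finset.mem_powerset.1 hA) (Reachable.refl D)
    have h2 : Reachable D ((D.lcSet A).twist ((D.lcSet A).E)) :=
      Reachable.twist D (D.lcSet A) _ (subset_refl _) h1
    rw [lcSet_E] at h2
    exact hD _ h2
  have hqS : ∀ A ∈ D.E.powerset, ∀ S : Finset α,
      ((D.lcSet A).twist D.E).rankMin (((D.lcSet A).twist D.E).E)
        - ((D.lcSet A).twist D.E).rankMin S = D.qval A S := by
    intro A hA S
    rw [rankMin_sub_eq (hDM A hA) S, qval, ← valset_twist]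
  have hchar : ∀ A ∈ D.E.powerset,
      ((D.lcSet A).dual).charPoly l
        = ∑ S ∈ D.E.powerset, (-1 : ℤ) ^ S.card * l ^ (D.qval A S) := by
    intro A hA
    rw [hdual A, charPoly]
    have hE : ((D.lcSet A).twist D.E).E = D.E := lcSet_E D A
    calc ∑ S ∈ ((D.lcSet A).twist D.E).E.powerset,
          (-1 : ℤ) ^ S.card * l ^ (((D.lcSet A).twist D.E).rankMin (((D.lcSet A).twist D.E).E)
            - ((D.lcSet A).twist D.E).rankMin S)
        = ∑ S ∈ D.E.powerset,
          (-1 : ℤ) ^ S.card * l ^ (((D.lcSet A).twist D.E).rankMin (((D.lcSet A).twist D.E).E)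
            - ((D.lcSet A).twist D.E).rankMin S) := by rw [hE]
      _ = _ := Finset.sum_congr rfl fun S _ => by rw [hqS A hA S]
  have hrw : ∀ A ∈ D.E.powerset,
      (-1 : ℤ) ^ A.card * ((D.lcSet A).dual).charPoly l
        = ∑ S ∈ D.E.powerset, (-1 : ℤ) ^ A.card * ((-1 : ℤ) ^ S.card * l ^ (D.qval A S)) := by
    intro A hA
    rw [hchar A hA, Finset.mul_sum]
  rw [Finset.sum_congr rfl hrw, Finset.sum_comm]
  have hempty : (∅ : Finset α) ∈ D.E.powerset := Finset.empty_mem_powerset _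
  rw [← Finset.add_sum_erase _ _ hempty]
  have hzero : ∑ S ∈ (D.E.powerset).erase ∅,
      ∑ A ∈ D.E.powerset, (-1 : ℤ) ^ A.card * ((-1 : ℤ) ^ S.card * l ^ (D.qval A S)) = 0 := by
    refine Finset.sum_eq_zero fun S hS => ?_
    obtain ⟨hSne, hSP⟩ := Finset.mem_erase.1 hS
    obtain ⟨s, hs⟩ := Finset.nonempty_iff_ne_empty.2 hSne
    refine Finset.sum_involution (fun A _ => A ∆ ({s} : Finset α)) ?_ ?_ ?_ ?_
    · intro A hA
      rw [neg_one_pow_symmDiff_singleton, qval_symmDiff D hs]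
      ring
    · intro A hA _
      intro hEq
      have hEq' : A ∆ ({s} : Finset α) = A := hEq
      have h1 : s ∈ A ∆ ({s} : Finset α) ↔ s ∉ A := by
        simp [Finset.mem_symmDiff]
      rw [hEq'] at h1
      by_cases hsA : s ∈ A
      · exact (h1.1 hsA) hsA
      · exact hsA (h1.2 hsA)
    · intro A hA
      rw [Finset.mem_powerset] at hA ⊢
      intro a ha
      rcases Finset.mem_symmDiff.1 ha with ⟨h, -⟩ | ⟨h, -⟩
      · exact hA h
      · exact Finset.mem_powerset.1 hSP (Finset.mem_singleton.1 h ▸ hs)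
    · intro A hA
      show A ∆ ({s} : Finset α) ∆ ({s} : Finset α) = A
      exact symmDiff_symmDiff_cancel_right _ _
  rw [hzero, add_zero, penrose]
  refine Finset.sum_congr rfl fun A hA => ?_
  have hq0 : minCard ((D.twist D.E).dpivot A) = D.qval A ∅ := by
    rw [dpivot_twist_eq D (Finset.mem_powerset.1 hA), minCard, qval, ← valset_twist]
    congr 1
    ext n
    simp [Finset.sdiff_empty]
  rw [hq0]
  simp


end SetSystem
end

section
/- Let D = (E,𝓕) be a delta-matroid and let x, y be positive real numbers. Then Σ_{B⊆E} (y/x)^{|B|/2} (xy)^{d(D*B)/2} = (y/x)^{r(E)/2} · Σ_{A⊆E} x^{r(E)−r(A)} y^{|A|−r(A)} (xy)^{−σ(A)/2}, where r is the rank function of D_min (r(S) = max{|F ∩ S| : F ∈ 𝓕_min(D)}), d(D') is the minimum cardinality of a feasible set of D', and σ(A) is the maximum cardinality of a feasible set of the restriction D|A minus the minimum cardinality of a feasible set of D|A. (This is the identity Q_{(1,√(y/x),0)}(D;√(xy)) = (√(y/x))^{r(E)} R(D; x+1, y, 1/√(xy)) relating the transition polynomial and the Bollobás–Riordan polynomial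 of D.) -/
open scoped symmDiff

namespace SetSystem

variable {α : Type} [DecidableEq α]

/-- The maximum cardinality of a feasible set of `D`. -/
noncomputable def maxCard (D : SetSystem α) : ℕ := sSup {n : ℕ | ∃ F ∈ D.F, n = F.card}

/-- The restriction `D|A = D ∖ (E−A)`, with feasible sets
`{F ∩ A : F ∈ 𝓕, |F \ A| ≤ |F' \ A| for all F' ∈ 𝓕}`. -/
def restrict (D : SetSystem α) (A : Finset α) : SetSystem α :=
  ⟨A, (D.F.filter fun F => ∀ F' ∈ D.F, (F \ A).card ≤ (F' \ A).card).image fun F => F ∩ A⟩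

/-- `σ(A) = r((D|A)_max) − r((D|A)_min)`: the difference between the maximum and
minimum cardinalities of feasible sets of `D|A`. -/
noncomputable def sigmaGap (D : SetSystem α) (A : Finset α) : ℕ :=
  (D.restrict A).maxCard - (D.restrict A).minCard

private lemma sd_single {X : Finset α} {u : α} (hu : u ∈ X) :
    X ∆ ({u, u} : Finset α) = X.erase u := by
  ext a
  by_cases h : a = u <;> simp [Finset.mem_symmDiff, h, hu]

private lemma sd_pair_in {X : Finset α} {u v : α} (hu : u ∈ X) (hv : v ∈ X) :
    X ∆ ({u, v} : Finset α) = (X.erase u).erase v := by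
  ext a
  by_cases h1 : a = u <;> by_cases h2 : a = v <;>
    simp [Finset.mem_symmDiff, h1, h2, hu, hv]

private lemma sd_pair_out {X : Finset α} {u v : α} (hu : u ∈ X) (hv : v ∉ X) :
    X ∆ ({u, v} : Finset α) = insert v (X.erase u) := by
  have huv : u ≠ v := by rintro rfl; exact hv hu
  ext a
  by_cases h1 : a = u <;> by_cases h2 : a = v <;>
    simp [Finset.mem_symmDiff, h1, h2, hu, hv, huv, Ne.symm huv]

private lemma erase_inter_eq (s A : Finset α) (u : α) :
    (s.erase u) ∩ A = (s ∩ A).erase u := by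
  ext a; simp only [Finset.mem_inter, Finset.mem_erase]; tauto

private lemma erase_sdiff_eq (s A : Finset α) (u : α) :
    (s.erase u) \ A = (s \ A).erase u := by
  ext a; simp only [Finset.mem_sdiff, Finset.mem_erase]; tauto

private lemma card_symmDiff_aux (A F : Finset α) :
    (A ∆ F).card + (A ∩ F).card = A.card + (F \ A).card := by
  have h1 : A ∆ F = (A \ F) ∪ (F \ A) := by
    ext a; simp [Finset.mem_symmDiff]
  have h2 : Disjoint (A \ F) (F \ A) := disjoint_sdiff_sdiff
  have h3 : (A ∆ F).card = (A \ F).card + (F \ A).card := by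
    rw [h1, Finset.card_union_of_disjoint h2]
  have h4 : (A \ F).card + (A ∩ F).card = A.card := Finset.card_sdiff_add_card_inter A F
  omega

/-- `min |F \ A|` over the feasible sets. -/
private noncomputable def mOut (D : SetSystem α) (A : Finset α) : ℕ :=
  sInf {n : ℕ | ∃ F ∈ D.F, n = (F \ A).card}

private lemma mOut_le {D : SetSystem α} {F : Finset α} (hF : F ∈ D.F) (A : Finset α) :
    mOut D A ≤ (F \ A).card := Nat.sInf_le ⟨F, hF, rfl⟩

private lemma mOut_attained {D : SetSystem α} (hne : D.F.Nonempty) (A : Finset α) :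
    ∃ G ∈ D.F, (G \ A).card = mOut D A := by
  obtain ⟨F0, hF0⟩ := hne
  obtain ⟨G, hG, h⟩ := Nat.sInf_mem (⟨_, F0, hF0, rfl⟩ :
    {n : ℕ | ∃ F ∈ D.F, n = (F \ A).card}.Nonempty)
  exact ⟨G, hG, h.symm⟩

private lemma minCard_le {D : SetSystem α} {F : Finset α} (hF : F ∈ D.F) :
    D.minCard ≤ F.card := Nat.sInf_le ⟨F, hF, rfl⟩

/-- There is a feasible set maximizing `|F ∩ A| - |F \ A|` that attains `mOut`. -/
private lemma exists_max_fit {D : SetSystem α} (hD : D.IsDeltaMatroid) (A : Finset α) :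
    ∃ F ∈ D.F, (F \ A).card = mOut D A ∧
      ∀ F' ∈ D.F, (F' ∩ A).card + (F \ A).card ≤ (F ∩ A).card + (F' \ A).card := by
  classical
  obtain ⟨hne, -, hex⟩ := hD
  obtain ⟨G, hG, hGm⟩ := mOut_attained hne A
  set f : Finset α → ℤ := fun F => ((F ∩ A).card : ℤ) - ((F \ A).card : ℤ) with hf
  obtain ⟨F0, hF0, hF0max⟩ := Finset.exists_max_image D.F f hne
  set T : Finset (Finset α) := D.F.filter (fun F => ∀ F' ∈ D.F, f F' ≤ f F) with hT
  have hF0T : F0 ∈ T := Finset.mem_filter.mpr ⟨hF0, hF0max⟩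
  obtain ⟨F, hFT, hFmin⟩ :=
    Finset.exists_min_image T (fun F => ((F \ A) \ G).card) ⟨F0, hF0T⟩
  rw [hT, Finset.mem_filter] at hFT
  obtain ⟨hF, hFmax⟩ := hFT
  have hTmem : ∀ F'' ∈ D.F, f F = f F'' → F'' ∈ T := by
    intro F'' h1 h2
    exact Finset.mem_filter.mpr ⟨h1, fun F' hF' => h2 ▸ hFmax F' hF'⟩
  have hkey : (F \ A).card = mOut D A := by
    by_contra hne2
    have hgt : mOut D A < (F \ A).card := lt_of_le_of_ne (mOut_le hF A) (Ne.symm hne2)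
    have hnonempty : ((F \ A) \ G).Nonempty := by
      rw [Finset.nonempty_iff_ne_empty]
      intro h
      have hsub2 : F \ A ⊆ G \ A := by
        intro a ha
        have haG : a ∈ G := by
          by_contra haG
          have : a ∈ (F \ A) \ G := Finset.mem_sdiff.mpr ⟨ha, haG⟩
          simp [h] at this
        exact Finset.mem_sdiff.mpr ⟨haG, (Finset.mem_sdiff.mp ha).2⟩
      have := Finset.card_le_card hsub2
      omega
    obtain ⟨u, hu⟩ := hnonempty
    rw [Finset.mem_sdiff] at hu
    obtain ⟨huFA, huG⟩ := hu
    rw [Finset.mem_sdiff] at huFA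
    obtain ⟨huF, huA⟩ := huFA
    have huIA : u ∉ F ∩ A := fun hc => huA (Finset.mem_inter.mp hc).2
    have huSA : u ∈ F \ A := Finset.mem_sdiff.mpr ⟨huF, huA⟩
    obtain ⟨v, hv, hfeas⟩ :=
      hex F hF G hG u (Finset.mem_symmDiff.mpr (Or.inl ⟨huF, huG⟩))
    rw [Finset.mem_symmDiff] at hv
    by_cases hvu : v = u
    · -- F' = F.erase u : f increases by 1, contradiction
      subst hvu
      rw [sd_single huF] at hfeas
      have h1 : (F.erase v) ∩ A = F ∩ A := by
        rw [erase_inter_eq, Finset.erase_eq_of_notMem huIA]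
      have h2 : ((F.erase v) \ A).card = (F \ A).card - 1 := by
        rw [erase_sdiff_eq, Finset.card_erase_of_mem huSA]
      have h3 := hFmax _ hfeas
      simp only [hf, h1, h2] at h3
      have h4 : 0 < (F \ A).card := by omega
      omega
    · rcases hv with ⟨hvF, hvG⟩ | ⟨hvG, hvF⟩
      · -- v ∈ F, v ∉ G
        rw [sd_pair_in huF hvF] at hfeas
        have hIA : (F.erase u) ∩ A = F ∩ A := by
          rw [erase_inter_eq, Finset.erase_eq_of_notMem huIA]
        have hSA : (F.erase u) \ A = (F \ A).erase u := erase_sdiff_eq F A u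
        by_cases hvA : v ∈ A
        · -- f stays, measure drops
          have hvIA : v ∈ F ∩ A := Finset.mem_inter.mpr ⟨hvF, hvA⟩
          have hvSA : v ∉ (F \ A).erase u := by
            simp [Finset.mem_erase, Finset.mem_sdiff, hvA]
          have h1 : ((F.erase u).erase v ∩ A).card = (F ∩ A).card - 1 := by
            rw [erase_inter_eq, hIA, Finset.card_erase_of_mem hvIA]
          have h2 : ((F.erase u).erase v \ A).card = (F \ A).card - 1 := by
            rw [erase_sdiff_eq, hSA, Finset.erase_eq_of_notMem hvSA,
              Finset.card_erase_of_mem huSA]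
          have h3 : ((F.erase u).erase v \ A) \ G = ((F \ A) \ G).erase u := by
            rw [erase_sdiff_eq, hSA, Finset.erase_eq_of_notMem hvSA, erase_sdiff_eq]
          have hfeq : f F = f ((F.erase u).erase v) := by
            have h4 : 0 < (F ∩ A).card := Finset.card_pos.mpr ⟨v, hvIA⟩
            have h5 : 0 < (F \ A).card := Finset.card_pos.mpr ⟨u, huSA⟩
            simp only [hf, h1, h2]
            omega
          have h6 := hFmin _ (hTmem _ hfeas hfeq)
          rw [h3, Finset.card_erase_of_mem (Finset.mem_sdiff.mpr ⟨huSA, huG⟩)] at h6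
          have h7 : 0 < ((F \ A) \ G).card :=
            Finset.card_pos.mpr ⟨u, Finset.mem_sdiff.mpr ⟨huSA, huG⟩⟩
          omega
        · -- f increases by 2
          have hvSA : v ∈ (F \ A).erase u := by
            simp [Finset.mem_erase, Finset.mem_sdiff, hvA, hvF, hvu]
          have h1 : ((F.erase u).erase v ∩ A) = F ∩ A := by
            rw [erase_inter_eq, hIA, Finset.erase_eq_of_notMem
              (fun hc => hvA (Finset.mem_inter.mp hc).2)]
          have h2 : ((F.erase u).erase v \ A).card = (F \ A).card - 2 := by
            rw [erase_sdiff_eq, hSA, Finset.card_erase_of_mem hvSA,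
              Finset.card_erase_of_mem huSA]
            omega
          have h3 := hFmax _ hfeas
          simp only [hf, h1, h2] at h3
          have h4 : 2 ≤ (F \ A).card := by
            have huv2 : u ≠ v := fun h => hvu h.symm
            have hsub3 : ({u, v} : Finset α) ⊆ F \ A := by
              intro a ha
              rcases Finset.mem_insert.mp ha with rfl | ha
              · exact huSA
              · rw [Finset.mem_singleton.mp ha]
                exact Finset.mem_sdiff.mpr ⟨hvF, hvA⟩
            have h5 := Finset.card_le_card hsub3
            rw [Finset.card_insert_of_notMem (by simp [huv2]),
              Finset.card_singleton] at h5
            exact h5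
          omega
      · -- v ∈ G, v ∉ F
        have hvu : v ≠ u := by rintro rfl; exact huG hvG
        have hvE : v ∉ F.erase u := fun hc => hvF (Finset.mem_of_mem_erase hc)
        rw [sd_pair_out huF hvF] at hfeas
        have hIA : (F.erase u) ∩ A = F ∩ A := by
          rw [erase_inter_eq, Finset.erase_eq_of_notMem huIA]
        by_cases hvA : v ∈ A
        · -- f increases by 2
          have h1 : (insert v (F.erase u)) ∩ A = insert v (F ∩ A) := by
            rw [Finset.insert_inter_of_mem hvA, hIA]
          have h2 : (insert v (F.erase u)) \ A = (F \ A).erase u := by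
            rw [Finset.insert_sdiff_of_mem _ hvA, erase_sdiff_eq]
          have h3 := hFmax _ hfeas
          have hvIA : v ∉ F ∩ A := fun hc => hvF (Finset.mem_inter.mp hc).1
          simp only [hf, h1, h2, Finset.card_insert_of_notMem hvIA,
            Finset.card_erase_of_mem huSA] at h3
          have h5 : 0 < (F \ A).card := Finset.card_pos.mpr ⟨u, huSA⟩
          omega
        · -- f stays, measure drops
          have h1 : (insert v (F.erase u)) ∩ A = F ∩ A := by
            rw [Finset.insert_inter_of_notMem hvA, hIA]
          have h2 : (insert v (F.erase u)) \ A = insert v ((F \ A).erase u) := by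
            rw [Finset.insert_sdiff_of_notMem _ hvA, erase_sdiff_eq]
          have hvSA : v ∉ (F \ A).erase u := by
            simp [Finset.mem_erase, Finset.mem_sdiff, hvF]
          have hfeq : f F = f (insert v (F.erase u)) := by
            simp only [hf, h1, h2, Finset.card_insert_of_notMem hvSA,
              Finset.card_erase_of_mem huSA]
            have h5 : 0 < (F \ A).card := Finset.card_pos.mpr ⟨u, huSA⟩
            omega
          have h3 : ((insert v (F.erase u)) \ A) \ G = ((F \ A) \ G).erase u := by
            rw [h2, Finset.insert_sdiff_of_mem _ hvG, erase_sdiff_eq]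
          have h6 := hFmin _ (hTmem _ hfeas hfeq)
          rw [h3, Finset.card_erase_of_mem (Finset.mem_sdiff.mpr ⟨huSA, huG⟩)] at h6
          have h7 : 0 < ((F \ A) \ G).card :=
            Finset.card_pos.mpr ⟨u, Finset.mem_sdiff.mpr ⟨huSA, huG⟩⟩
          omega
  refine ⟨F, hF, hkey, fun F' hF' => ?_⟩
  have := hFmax F' hF'
  simp only [hf] at this
  omega

/-- There is a minimum-cardinality feasible set attaining `mOut`. -/
private lemma exists_min_both {D : SetSystem α} (hD : D.IsDeltaMatroid) (A : Finset α) :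
    ∃ F ∈ D.F, F.card = D.minCard ∧ (F \ A).card = mOut D A := by
  classical
  obtain ⟨hne, -, hex⟩ := hD
  obtain ⟨G, hG, hGm⟩ := mOut_attained hne A
  obtain ⟨F1, hF1, hF1c⟩ := Nat.sInf_mem (⟨_, hne.choose, hne.choose_spec, rfl⟩ :
    {n : ℕ | ∃ F ∈ D.F, n = F.card}.Nonempty)
  set T : Finset (Finset α) := D.F.filter (fun F => F.card = D.minCard) with hT
  have hF1T : F1 ∈ T := Finset.mem_filter.mpr ⟨hF1, hF1c.symm⟩
  obtain ⟨F, hFT, hFmin⟩ :=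
    Finset.exists_min_image T (fun F => ((F \ A) \ G).card) ⟨F1, hF1T⟩
  rw [hT, Finset.mem_filter] at hFT
  obtain ⟨hF, hFc⟩ := hFT
  refine ⟨F, hF, hFc, ?_⟩
  by_contra hne2
  have hgt : mOut D A < (F \ A).card := lt_of_le_of_ne (mOut_le hF A) (Ne.symm hne2)
  have hnonempty : ((F \ A) \ G).Nonempty := by
    rw [Finset.nonempty_iff_ne_empty]
    intro h
    have hsub2 : F \ A ⊆ G \ A := by
      intro a ha
      have haG : a ∈ G := by
        by_contra haG
        have : a ∈ (F \ A) \ G := Finset.mem_sdiff.mpr ⟨ha, haG⟩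
        simp [h] at this
      exact Finset.mem_sdiff.mpr ⟨haG, (Finset.mem_sdiff.mp ha).2⟩
    have := Finset.card_le_card hsub2
    omega
  obtain ⟨u, hu⟩ := hnonempty
  rw [Finset.mem_sdiff] at hu
  obtain ⟨huFA, huG⟩ := hu
  rw [Finset.mem_sdiff] at huFA
  obtain ⟨huF, huA⟩ := huFA
  have huSA : u ∈ F \ A := Finset.mem_sdiff.mpr ⟨huF, huA⟩
  obtain ⟨v, hv, hfeas⟩ :=
    hex F hF G hG u (Finset.mem_symmDiff.mpr (Or.inl ⟨huF, huG⟩))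
  rw [Finset.mem_symmDiff] at hv
  by_cases hvu : v = u
  · subst hvu
    rw [sd_single huF] at hfeas
    have := minCard_le hfeas
    rw [Finset.card_erase_of_mem huF] at this
    have : 0 < F.card := Finset.card_pos.mpr ⟨v, huF⟩
    omega
  · rcases hv with ⟨hvF, hvG⟩ | ⟨hvG, hvF⟩
    · -- v ∈ F : card drops by 2, contradiction
      rw [sd_pair_in huF hvF] at hfeas
      have h1 := minCard_le hfeas
      have hvE : v ∈ F.erase u := Finset.mem_erase.mpr ⟨hvu, hvF⟩
      rw [Finset.card_erase_of_mem hvE, Finset.card_erase_of_mem huF] at h1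
      have h2 : 2 ≤ F.card := by
        have huv2 : u ≠ v := fun h => hvu h.symm
        have hsub3 : ({u, v} : Finset α) ⊆ F := by
          intro a ha
          rcases Finset.mem_insert.mp ha with rfl | ha
          · exact huF
          · rw [Finset.mem_singleton.mp ha]; exact hvF
        have h5 := Finset.card_le_card hsub3
        rw [Finset.card_insert_of_notMem (by simp [huv2]), Finset.card_singleton] at h5
        exact h5
      omega
    · -- v ∈ G, v ∉ F : card stays, measure drops
      have hvE : v ∉ F.erase u := fun hc => hvF (Finset.mem_of_mem_erase hc)
      rw [sd_pair_out huF hvF] at hfeas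
      have hc : (insert v (F.erase u)).card = F.card := by
        rw [Finset.card_insert_of_notMem hvE, Finset.card_erase_of_mem huF]
        have : 0 < F.card := Finset.card_pos.mpr ⟨u, huF⟩
        omega
      have hmem : insert v (F.erase u) ∈ T :=
        Finset.mem_filter.mpr ⟨hfeas, by rw [hc, hFc]⟩
      have h6 := hFmin _ hmem
      have h3 : ((insert v (F.erase u)) \ A) \ G = ((F \ A) \ G).erase u := by
        by_cases hvA : v ∈ A
        · rw [Finset.insert_sdiff_of_mem _ hvA, erase_sdiff_eq, erase_sdiff_eq]
        · rw [Finset.insert_sdiff_of_notMem _ hvA, erase_sdiff_eq,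
            Finset.insert_sdiff_of_mem _ hvG, erase_sdiff_eq]
      rw [h3, Finset.card_erase_of_mem (Finset.mem_sdiff.mpr ⟨huSA, huG⟩)] at h6
      have h7 : 0 < ((F \ A) \ G).card :=
        Finset.card_pos.mpr ⟨u, Finset.mem_sdiff.mpr ⟨huSA, huG⟩⟩
      omega

private lemma aux_key (D : SetSystem α) (hD : D.IsDeltaMatroid) (A : Finset α) :
    minCard (D.twist A) + D.sigmaGap A + 2 * D.rankMin A = A.card + D.rankMin D.E ∧
      D.rankMin A ≤ D.rankMin D.E ∧ D.rankMin A ≤ A.card := by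
  classical
  obtain ⟨hne, hsub, -⟩ := id hD
  set k := D.minCard with hkdef
  set m := mOut D A with hmdef
  have hk_le : ∀ F ∈ D.F, k ≤ F.card := fun F hF => minCard_le hF
  have hm_le : ∀ F ∈ D.F, m ≤ (F \ A).card := fun F hF => mOut_le hF A
  obtain ⟨G, hG, hGm⟩ := mOut_attained hne A
  obtain ⟨FB, hFB, hFBk, hFBm⟩ := exists_min_both hD A
  obtain ⟨FM, hFM, hFMm, hFMdom⟩ := exists_max_fit hD A
  have hmk : m ≤ k := by
    have h1 : (FB \ A).card ≤ FB.card := Finset.card_le_card (Finset.sdiff_subset)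
    omega
  -- Fmin membership characterization
  have hFmin_iff : ∀ F, F ∈ D.Fmin ↔ F ∈ D.F ∧ F.card = k := by
    intro F
    rw [Fmin, Finset.mem_filter]
    constructor
    · rintro ⟨h1, h2⟩
      exact ⟨h1, le_antisymm (le_trans (h2 FB hFB) (le_of_eq hFBk)) (hk_le F h1)⟩
    · rintro ⟨h1, h2⟩
      exact ⟨h1, fun F' hF' => h2 ▸ hk_le F' hF'⟩
  -- rankMin D E = k
  have hR : D.rankMin D.E = k := by
    rw [rankMin]
    have hset : {n : ℕ | ∃ F ∈ D.Fmin, n = (F ∩ D.E).card} = {k} := by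
      ext n
      simp only [Set.mem_setOf_eq, Set.mem_singleton_iff]
      constructor
      · rintro ⟨F, hF, rfl⟩
        obtain ⟨h1, h2⟩ := (hFmin_iff F).mp hF
        rw [Finset.inter_eq_left.mpr (hsub F h1), h2]
      · rintro rfl
        refine ⟨FB, (hFmin_iff FB).mpr ⟨hFB, hFBk⟩, ?_⟩
        rw [Finset.inter_eq_left.mpr (hsub FB hFB), hFBk]
    rw [hset, csSup_singleton]
  -- rankMin A
  have hFBint : (FB ∩ A).card + (FB \ A).card = FB.card := Finset.card_inter_add_card_sdiff FB A
  have hrBdd : BddAbove {n : ℕ | ∃ F ∈ D.Fmin, n = (F ∩ A).card} := by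
    refine ⟨A.card, ?_⟩
    rintro n ⟨F, hF, rfl⟩
    exact Finset.card_le_card Finset.inter_subset_right
  have hFBmem : (FB ∩ A).card ∈ {n : ℕ | ∃ F ∈ D.Fmin, n = (F ∩ A).card} :=
    ⟨FB, (hFmin_iff FB).mpr ⟨hFB, hFBk⟩, rfl⟩
  have hr_ge : (FB ∩ A).card ≤ D.rankMin A := le_csSup hrBdd hFBmem
  have hr_le : D.rankMin A + m ≤ k := by
    have h1 : D.rankMin A ≤ k - m := by
      apply csSup_le ⟨_, hFBmem⟩
      rintro n ⟨F, hF, rfl⟩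
      obtain ⟨h1, h2⟩ := (hFmin_iff F).mp hF
      have h3 : (F ∩ A).card + (F \ A).card = F.card := Finset.card_inter_add_card_sdiff F A
      have h4 := hm_le F h1
      omega
    omega
  have hr : D.rankMin A + m = k := by omega
  have hrA : D.rankMin A ≤ A.card := by
    apply csSup_le ⟨_, hFBmem⟩
    rintro n ⟨F, hF, rfl⟩
    exact Finset.card_le_card Finset.inter_subset_right
  -- restrict membership characterization
  have hrest : ∀ H, H ∈ (D.restrict A).F ↔ ∃ F ∈ D.F, (F \ A).card = m ∧ H = F ∩ A := by
    intro H
    simp only [restrict, Finset.mem_image, Finset.mem_filter]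
    constructor
    · rintro ⟨F, ⟨hF, hall⟩, rfl⟩
      refine ⟨F, hF, le_antisymm (le_trans (hall G hG) (le_of_eq hGm)) (hm_le F hF), rfl⟩
    · rintro ⟨F, hF, hFm, rfl⟩
      exact ⟨F, ⟨hF, fun F' hF' => le_trans (le_of_eq hFm) (hm_le F' hF')⟩, rfl⟩
  -- maxCard of restrict
  set Mx := (FM ∩ A).card with hMxdef
  have hFMrest : FM ∩ A ∈ (D.restrict A).F := (hrest _).mpr ⟨FM, hFM, hFMm, rfl⟩
  have hbddr : BddAbove {n : ℕ | ∃ H ∈ (D.restrict A).F, n = H.card} := by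
    refine ⟨A.card, ?_⟩
    rintro n ⟨H, hH, rfl⟩
    obtain ⟨F, hF, hFm2, rfl⟩ := (hrest H).mp hH
    exact Finset.card_le_card Finset.inter_subset_right
  have hMx : maxCard (D.restrict A) = Mx := by
    rw [maxCard]
    have hne3 : {n : ℕ | ∃ H ∈ (D.restrict A).F, n = H.card}.Nonempty :=
      ⟨Mx, FM ∩ A, hFMrest, rfl⟩
    apply le_antisymm
    · apply csSup_le hne3
      rintro n ⟨H, hH, rfl⟩
      obtain ⟨F, hF, hFm2, rfl⟩ := (hrest H).mp hH
      have := hFMdom F hF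
      omega
    · exact le_csSup hbddr ⟨FM ∩ A, hFMrest, rfl⟩
  -- minCard of restrict
  have hμk : minCard (D.restrict A) + m = k ∧ minCard (D.restrict A) ≤ Mx := by
    have h0 : minCard (D.restrict A) ∈ {n : ℕ | ∃ H ∈ (D.restrict A).F, n = H.card} :=
      Nat.sInf_mem (⟨Mx, FM ∩ A, hFMrest, rfl⟩ :
        {n : ℕ | ∃ H ∈ (D.restrict A).F, n = H.card}.Nonempty)
    obtain ⟨H, hH, hHcard⟩ := h0
    obtain ⟨F, hF, hFm2, rfl⟩ := (hrest H).mp hH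
    have h1 : (F ∩ A).card + (F \ A).card = F.card := Finset.card_inter_add_card_sdiff F A
    have h2 := hk_le F hF
    have h3 : minCard (D.restrict A) ≤ (FB ∩ A).card :=
      Nat.sInf_le ⟨FB ∩ A, (hrest _).mpr ⟨FB, hFB, hFBm, rfl⟩, rfl⟩
    have h4 := hFMdom F hF
    constructor <;> omega
  obtain ⟨hμ, hμM⟩ := hμk
  have hσ : D.sigmaGap A + minCard (D.restrict A) = Mx := by
    rw [sigmaGap, hMx]
    omega
  -- minCard of twist
  have htwist_mem : ∀ n : ℕ, (∃ H ∈ (D.twist A).F, n = H.card) ↔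
      ∃ F ∈ D.F, n = (A ∆ F).card := by
    intro n
    simp only [twist, Finset.mem_image]
    constructor
    · rintro ⟨H, ⟨F, hF, rfl⟩, rfl⟩
      exact ⟨F, hF, rfl⟩
    · rintro ⟨F, hF, rfl⟩
      exact ⟨A ∆ F, ⟨F, hF, rfl⟩, rfl⟩
  have htwset : {n : ℕ | ∃ H ∈ (D.twist A).F, n = H.card} =
      {n : ℕ | ∃ F ∈ D.F, n = (A ∆ F).card} := by
    ext n; exact htwist_mem n
  have hcardFM : (A ∆ FM).card + (FM ∩ A).card = A.card + (FM \ A).card := by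
    have := card_symmDiff_aux A FM
    rwa [Finset.inter_comm] at this
  have hd_le : minCard (D.twist A) ≤ (A ∆ FM).card := by
    rw [minCard, htwset]
    exact Nat.sInf_le ⟨FM, hFM, rfl⟩
  have hd_mem : ∃ F ∈ D.F, minCard (D.twist A) = (A ∆ F).card := by
    rw [minCard, htwset]
    exact Nat.sInf_mem (⟨_, FM, hFM, rfl⟩ : {n : ℕ | ∃ F ∈ D.F, n = (A ∆ F).card}.Nonempty)
  have hd : minCard (D.twist A) + Mx = A.card + m := by
    obtain ⟨F, hF, hdF⟩ := hd_mem
    have hc2 : (A ∆ F).card + (F ∩ A).card = A.card + (F \ A).card := by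
      have := card_symmDiff_aux A F
      rwa [Finset.inter_comm] at this
    have hdom := hFMdom F hF
    omega
  exact ⟨by omega, by omega, hrA⟩

private lemma aux_term (x y : ℝ) (hx : 0 < x) (hy : 0 < y) (a d R r σ : ℕ)
    (h : d + σ + 2 * r = a + R) (h1 : r ≤ R) (h2 : r ≤ a) :
    Real.sqrt (y / x) ^ a * Real.sqrt (x * y) ^ d =
      Real.sqrt (y / x) ^ R *
        (x ^ (R - r) * y ^ (a - r) * (Real.sqrt (x * y))⁻¹ ^ σ) := by
  obtain ⟨s, hs, rfl⟩ : ∃ s : ℝ, 0 < s ∧ s ^ 2 = x :=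
    ⟨Real.sqrt x, Real.sqrt_pos.mpr hx, Real.sq_sqrt hx.le⟩
  obtain ⟨t, ht, rfl⟩ : ∃ t : ℝ, 0 < t ∧ t ^ 2 = y :=
    ⟨Real.sqrt y, Real.sqrt_pos.mpr hy, Real.sq_sqrt hy.le⟩
  have e1 : Real.sqrt (t ^ 2 / s ^ 2) = t / s := by
    rw [Real.sqrt_div (by positivity), Real.sqrt_sq hs.le, Real.sqrt_sq ht.le]
  have e2 : Real.sqrt (s ^ 2 * t ^ 2) = s * t := by
    rw [Real.sqrt_mul (by positivity), Real.sqrt_sq hs.le, Real.sqrt_sq ht.le]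
  rw [e1, e2]
  obtain ⟨R', rfl⟩ : ∃ R', R = r + R' := ⟨R - r, by omega⟩
  obtain ⟨a', rfl⟩ : ∃ a', a = r + a' := ⟨a - r, by omega⟩
  rw [Nat.add_sub_cancel_left, Nat.add_sub_cancel_left]
  have hd : d + σ = a' + R' := by omega
  have hst : s * t ≠ 0 := by positivity
  have hs' : s ≠ 0 := ne_of_gt hs
  have ht' : t ≠ 0 := ne_of_gt ht
  apply mul_right_cancel₀ (pow_ne_zero σ hst)
  rw [mul_assoc, ← pow_add, hd]
  rw [inv_pow, div_pow, div_pow]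
  field_simp
  ring
/-- The identity `Q_{(1,√(y/x),0)}(D;√(xy)) = (√(y/x))^{r(E)} R(D; x+1, y, 1/√(xy))`
relating the transition polynomial and the Bollobás–Riordan polynomial of `D`. -/
theorem transition_eq_bollobasRiordan (D : SetSystem α) (hD : D.IsDeltaMatroid)
    (x y : ℝ) (hx : 0 < x) (hy : 0 < y) :
    (∑ B ∈ D.E.powerset,
        Real.sqrt (y / x) ^ B.card * Real.sqrt (x * y) ^ minCard (D.twist B)) =
      Real.sqrt (y / x) ^ D.rankMin D.E *
        ∑ A ∈ D.E.powerset,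
          x ^ (D.rankMin D.E - D.rankMin A) * y ^ (A.card - D.rankMin A) *
            (Real.sqrt (x * y))⁻¹ ^ D.sigmaGap A := by
  classical
  rw [Finset.mul_sum]
  apply Finset.sum_congr rfl
  intro A hA
  obtain ⟨hkey, h1, h2⟩ := aux_key D hD A
  exact aux_term x y hx hy A.card _ _ _ _ hkey h1 h2

end SetSystem
end

section
/- Let M be a matroid on a finite ground set E with rank function r, and let A ⊆ E. Then min{|A △ B| : B a base of M} = r(E) + |A| − 2·r(A) and max{|A △ B| : B a base of M} = 2·r(E−A) + |A| − r(E). In particular, all sets in {A △ B : B a base of M} have cardinalities of the same parity, so the twist M*A is an even delta-matroid. -/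
open scoped symmDiff Matroid

namespace PaperMatroid

variable {α : Type}

/-- The contraction `M/C`, defined via duality: `M/C = (M✶ ∖ C)✶`. -/
def contr (M : Matroid α) (C : Set α) : Matroid α := (M✶ ↾ (M.E \ C))✶

/-- The rank of a set `X`: the size of a largest independent subset of `X`. -/
noncomputable def rkFn (M : Matroid α) (X : Set α) : ℕ :=
  sSup {n : ℕ | ∃ I, M.Indep I ∧ I ⊆ X ∧ n = I.ncard}

/-- `F` is a minimum-cardinality member of the twist family `{A ∆ B : B a base of M}`. -/
def MinTwistMem (M : Matroid α) (A F : Set α) : Prop :=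
  (∃ B, M.IsBase B ∧ F = A ∆ B) ∧
    ∀ F', (∃ B, M.IsBase B ∧ F' = A ∆ B) → F.ncard ≤ F'.ncard

/-- `F` is a maximum-cardinality member of the twist family `{A ∆ B : B a base of M}`. -/
def MaxTwistMem (M : Matroid α) (A F : Set α) : Prop :=
  (∃ B, M.IsBase B ∧ F = A ∆ B) ∧
    ∀ F', (∃ B, M.IsBase B ∧ F' = A ∆ B) → F'.ncard ≤ F.ncard

/-- A circuit of `M`: a minimal dependent set. -/
def IsCircuit (M : Matroid α) (C : Set α) : Prop :=
  C ⊆ M.E ∧ ¬ M.Indep C ∧ ∀ X, X ⊂ C → M.Indep X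

/-- The circuit space of `M`: all disjoint unions of circuits (including `∅`). -/
def CircuitSpace (M : Matroid α) : Set (Set α) :=
  {X | ∃ 𝒞 : Finset (Set α), (∀ C ∈ 𝒞, IsCircuit M C) ∧
        (↑𝒞 : Set (Set α)).Pairwise Disjoint ∧ X = ⋃₀ ↑𝒞}

/-- The bicycle space of `M`: the intersection of the circuit space and the
cocircuit space (the circuit space of the dual). -/
def BicycleSpace (M : Matroid α) : Set (Set α) := CircuitSpace M ∩ CircuitSpace M✶

/-- A matroid is bipartite if every circuit has even cardinality. -/
def Bipartite (M : Matroid α) : Prop := ∀ C, IsCircuit M C → Even C.ncard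

/-- A matroid is Eulerian if its ground set is a disjoint union of circuits. -/
def Eulerian (M : Matroid α) : Prop :=
  ∃ 𝒞 : Finset (Set α), (∀ C ∈ 𝒞, IsCircuit M C) ∧
    (↑𝒞 : Set (Set α)).Pairwise Disjoint ∧ ⋃₀ ↑𝒞 = M.E

/-- Representability of a matroid over a field `K`: there is a map of the ground set
into a `K`-vector space under which a set is independent exactly when its image is
linearly independent. -/
def IsRepresentableOver (M : Matroid α) (K : Type) [Field K] : Prop :=
  ∃ (V : Type) (_ : AddCommGroup V) (_ : Module K V) (φ : α → V),
    ∀ I, I ⊆ M.E → (M.Indep I ↔ LinearIndependent K (I.restrict φ))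

/-- A binary matroid: one representable over `GF(2)`. -/
def Binary (M : Matroid α) : Prop := IsRepresentableOver M (ZMod 2)

open Set in
lemma indep_ncard_le {M : Matroid α} [M.Finite] {I J X : Set α} (hJ : M.IsBasis J X)
    (hI : M.Indep I) (hIX : I ⊆ X) : I.ncard ≤ J.ncard := by
  obtain ⟨J', hJ', hIJ'⟩ := hI.subset_isBasis_of_subset hIX hJ.subset_ground
  have h1 : I.ncard ≤ J'.ncard :=
    ncard_le_ncard hIJ' (M.set_finite J' hJ'.indep.subset_ground)
  have h2 : J'.encard = J.encard := hJ'.encard_eq_encard hJ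
  have : J'.ncard = J.ncard := by
    rw [Set.ncard_def, Set.ncard_def, h2]
  omega

open Set in
lemma rkFn_eq_basis_ncard {M : Matroid α} [M.Finite] {J X : Set α} (hJ : M.IsBasis J X) :
    rkFn M X = J.ncard := by
  apply IsGreatest.csSup_eq
  constructor
  · exact ⟨J, hJ.indep, hJ.subset, rfl⟩
  · rintro n ⟨I, hI, hIX, rfl⟩
    exact indep_ncard_le hJ hI hIX

open Set in
lemma symmDiff_card {A B : Set α} (hA : A.Finite) (hB : B.Finite) :
    (A ∆ B).ncard + 2 * (A ∩ B).ncard = A.ncard + B.ncard := by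
  have h1 : (A ∆ B).ncard = (A \ B).ncard + (B \ A).ncard := by
    rw [Set.symmDiff_def]
    exact ncard_union_eq disjoint_sdiff_sdiff (hA.diff (t := B)) (hB.diff (t := A))
  have h2 := ncard_inter_add_ncard_diff_eq_ncard A B hA
  have h3 := ncard_inter_add_ncard_diff_eq_ncard B A hB
  rw [Set.inter_comm B A] at h3
  omega

/-- The minimum and maximum cardinalities of members of `{A ∆ B : B a base of M}`
are `r(E) + |A| − 2r(A)` and `2r(E−A) + |A| − r(E)` respectively; in particular all
members have cardinalities of the same parity, so the twist `M*A` is an even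
delta-matroid. -/
theorem twist_min_max_card (M : Matroid α) [M.Finite] (A : Set α) (hA : A ⊆ M.E) :
    IsLeast {n : ℤ | ∃ B, M.IsBase B ∧ n = (A ∆ B).ncard}
        ((rkFn M M.E : ℤ) + A.ncard - 2 * rkFn M A) ∧
      IsGreatest {n : ℤ | ∃ B, M.IsBase B ∧ n = (A ∆ B).ncard}
        (2 * (rkFn M (M.E \ A) : ℤ) + A.ncard - rkFn M M.E) ∧
      ∀ B₁ B₂, M.IsBase B₁ → M.IsBase B₂ → (A ∆ B₁).ncard % 2 = (A ∆ B₂).ncard % 2 := by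
  have hEfin : M.E.Finite := M.set_finite M.E
  have hAfin : A.Finite := hEfin.subset hA
  obtain ⟨JA, hJA⟩ := M.exists_isBasis A hA
  obtain ⟨JC, hJC⟩ := M.exists_isBasis (M.E \ A) Set.diff_subset
  have hrE : ∀ B, M.IsBase B → B.ncard = rkFn M M.E := fun B hB =>
    (rkFn_eq_basis_ncard hB.isBasis_ground).symm
  have hBfin : ∀ B, M.IsBase B → B.Finite := fun B hB => hEfin.subset hB.subset_ground
  have hsd : ∀ B, M.IsBase B → (A ∆ B).ncard + 2 * (A ∩ B).ncard = A.ncard + B.ncard :=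
    fun B hB => symmDiff_card hAfin (hBfin B hB)
  have hsplit : ∀ B, M.IsBase B → (A ∩ B).ncard + (B \ A).ncard = B.ncard := by
    intro B hB
    have := Set.ncard_inter_add_ncard_diff_eq_ncard B A (hBfin B hB)
    rwa [Set.inter_comm B A] at this
  have hiA : ∀ B, M.IsBase B → (A ∩ B).ncard ≤ rkFn M A := by
    intro B hB
    rw [rkFn_eq_basis_ncard hJA]
    exact indep_ncard_le hJA (hB.indep.inter_left A) Set.inter_subset_left
  have hiC : ∀ B, M.IsBase B → (B \ A).ncard ≤ rkFn M (M.E \ A) := by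
    intro B hB
    rw [rkFn_eq_basis_ncard hJC]
    exact indep_ncard_le hJC (hB.indep.subset Set.diff_subset)
      (Set.diff_subset_diff_left hB.subset_ground)
  refine ⟨⟨?_, ?_⟩, ⟨?_, ?_⟩, ?_⟩
  · -- min is attained
    obtain ⟨B, hB, hJAB⟩ := hJA.exists_isBase
    refine ⟨B, hB, ?_⟩
    have h1 := hsd B hB
    have h2 := hrE B hB
    have h3 : (A ∩ B).ncard = rkFn M A := by
      rw [rkFn_eq_basis_ncard hJA, hJAB, Set.inter_comm]
    omega
  · -- min is a lower bound
    rintro n ⟨B, hB, rfl⟩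
    have h1 := hsd B hB
    have h2 := hrE B hB
    have h3 := hiA B hB
    omega
  · -- max is attained
    obtain ⟨B, hB, hJCB⟩ := hJC.exists_isBase
    refine ⟨B, hB, ?_⟩
    have h1 := hsd B hB
    have h2 := hrE B hB
    have h4 := hsplit B hB
    have h3 : (B \ A).ncard = rkFn M (M.E \ A) := by
      rw [rkFn_eq_basis_ncard hJC, hJCB, ← Set.inter_diff_assoc,
        Set.inter_eq_self_of_subset_left hB.subset_ground]
    omega
  · -- max is an upper bound
    rintro n ⟨B, hB, rfl⟩
    have h1 := hsd B hB
    have h2 := hrE B hB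
    have h4 := hsplit B hB
    have h3 := hiC B hB
    omega
  · -- parity
    intro B₁ B₂ hB₁ hB₂
    have h1 := hsd B₁ hB₁
    have h2 := hsd B₂ hB₂
    have h3 := hB₁.ncard_eq_ncard_of_isBase hB₂
    omega


end PaperMatroid
end
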